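/- arXiv:2206.00824 — 2 statements merged into one kernel-verified Lean document; each statement's English description precedes it below -/
import Mathlib

section
/- (Corollary 2) Let d ≥ 1 and s₁, s₂ ∈ ℝ. Suppose the tensor Θ: ℤ^d × ℤ^d × ℤ^d → ℂ satisfies ‖Θ‖_{0,N} = sup_{j,k,ℓ∈ℤ^d} |Θ(j,k,ℓ)| ⟨|j−k|+|j−ℓ|⟩^{2N} < ∞ for some N > d + (1/2)(|s₁| + |s₂|). Then 𝒯_Θ is a bounded bilinear operator from ℓ^p_{s₁}(ℤ^d) × ℓ^q_{s₂}(ℤ^d) to ℓ^r_{s₁+s₂}(ℤ^d) for any 1 ≤ p, q, r ≤ ∞ with 1/p + 1/q = 1/r; in particular, if Θ satisfies this condition for some N > d, then 𝒯_Θ is bounded from ℓ^p(ℤ^d) × ℓ^q(ℤ^d) to ℓ^r(ℤ^d). -/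
open scoped ENNReal NNReal BigOperators

noncomputable section

/-- The integer lattice `ℤ^d`. -/
abbrev Zd (d : ℕ) := Fin d → ℤ

/-- Euclidean norm `|j|` of an integer vector `j ∈ ℤ^d`. -/
def znorm {d : ℕ} (j : Zd d) : ℝ := Real.sqrt (∑ i, ((j i : ℝ)) ^ 2)

/-- Euclidean norm of a real vector. -/
def rnorm {d : ℕ} (x : Fin d → ℝ) : ℝ := Real.sqrt (∑ i, (x i) ^ 2)

/-- Japanese bracket `⟨x⟩ = (1 + x²)^{1/2}`. -/
def jb (x : ℝ) : ℝ := Real.sqrt (1 + x ^ 2)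

/-- The discrete bilinear operator `𝒯_Θ` (named `Tbil` here) associated with an infinite tensor `Θ`:
`(𝒯_Θ(f,g))_j = Σ_k Σ_ℓ Θ(j,k,ℓ) f_k g_ℓ`. -/
def Tbil {d : ℕ} (Θ : Zd d → Zd d → Zd d → ℂ) (f g : Zd d → ℂ) : Zd d → ℂ :=
  fun j => ∑' k, ∑' l, Θ j k l * f k * g l

/-- `ℓ^p`-type norm (extended-real valued) of a family of nonnegative extended reals,
with the usual modification (supremum) when `p = ∞`. -/
def nestNorm {ι : Type*} (p : ℝ≥0∞) (F : ι → ℝ≥0∞) : ℝ≥0∞ :=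
  if p = ∞ then ⨆ i, F i else (∑' i, F i ^ p.toReal) ^ (1 / p.toReal)

/-- The weighted `ℓ^p_s(ℤ^d)` norm `(Σ_k ⟨k⟩^{sp} |f_k|^p)^{1/p}`. -/
def wlpNorm {d : ℕ} (p : ℝ≥0∞) (s : ℝ) (f : Zd d → ℂ) : ℝ≥0∞ :=
  nestNorm p fun k => ENNReal.ofReal (jb (znorm k) ^ s * ‖f k‖)

/-- The `ℓ^p(ℤ^d)` norm. -/
def lpNorm {d : ℕ} (p : ℝ≥0∞) (f : Zd d → ℂ) : ℝ≥0∞ :=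
  nestNorm p fun k => ENNReal.ofReal ‖f k‖

/-- The tensor norm `‖Θ‖_{ω,N} = sup_{j,k,ℓ} |Θ(j,k,ℓ)| ⟨|j−k|+|j−ℓ|⟩^{2N} /
(⟨|j|+|k|⟩^ω ⟨|j|+|ℓ|⟩^ω)`. -/
def tensorNorm {d : ℕ} (ω N : ℝ) (Θ : Zd d → Zd d → Zd d → ℂ) : ℝ≥0∞ :=
  ⨆ j, ⨆ k, ⨆ l, ENNReal.ofReal
    (‖Θ j k l‖ * jb (znorm (j - k) + znorm (j - l)) ^ (2 * N) /
      (jb (znorm j + znorm k) ^ ω * jb (znorm j + znorm l) ^ ω))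

/-- The tensor norm `‖Θ‖_{ω₁,ω₂,N}`. -/
def tensorNorm2 {d : ℕ} (ω₁ ω₂ N : ℝ) (Θ : Zd d → Zd d → Zd d → ℂ) : ℝ≥0∞ :=
  ⨆ j, ⨆ k, ⨆ l, ENNReal.ofReal
    (‖Θ j k l‖ * jb (znorm (j - k) + znorm (j - l)) ^ (2 * N) /
      (jb (znorm j + znorm k) ^ ω₁ * jb (znorm j + znorm l) ^ ω₂))

/-- The tensor norm `‖Θ‖_{0,0,ω,N} = sup_{j,k,ℓ} |Θ(j,k,ℓ)| ⟨|j−k|+|j−ℓ|⟩^{2N} /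
⟨|j|+|k|+|ℓ|⟩^ω`. -/
def tensorNorm00 {d : ℕ} (ω N : ℝ) (Θ : Zd d → Zd d → Zd d → ℂ) : ℝ≥0∞ :=
  ⨆ j, ⨆ k, ⨆ l, ENNReal.ofReal
    (‖Θ j k l‖ * jb (znorm (j - k) + znorm (j - l)) ^ (2 * N) /
      jb (znorm j + znorm k + znorm l) ^ ω)

/-- The first bilinear commutator `[𝒯_Θ, b]₁(f,g) = 𝒯_Θ(bf, g) − b·𝒯_Θ(f,g)`. -/
def comm1 {d : ℕ} (Θ : Zd d → Zd d → Zd d → ℂ) (b f g : Zd d → ℂ) : Zd d → ℂ :=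
  fun j => Tbil Θ (fun k => b k * f k) g j - b j * Tbil Θ f g j

/-- The second bilinear commutator `[𝒯_Θ, b]₂(f,g) = 𝒯_Θ(f, bg) − b·𝒯_Θ(f,g)`. -/
def comm2 {d : ℕ} (Θ : Zd d → Zd d → Zd d → ℂ) (b f g : Zd d → ℂ) : Zd d → ℂ :=
  fun j => Tbil Θ f (fun l => b l * g l) j - b j * Tbil Θ f g j

/-- One-step finite difference in the variables `(j,k)`, with shift `v ∈ ℤ^d`:
`(D2 v Θ)(j,k,ℓ) = Θ(j+v, k+v, ℓ) − Θ(j,k,ℓ)`. -/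
def D2 {d : ℕ} (v : Zd d) (Θ : Zd d → Zd d → Zd d → ℂ) : Zd d → Zd d → Zd d → ℂ :=
  fun j k l => Θ (j + v) (k + v) l - Θ j k l

/-- One-step finite difference in the variables `(j,ℓ)`, with shift `v ∈ ℤ^d`:
`(D3 v Θ)(j,k,ℓ) = Θ(j+v, k, ℓ+v) − Θ(j,k,ℓ)`. -/
def D3 {d : ℕ} (v : Zd d) (Θ : Zd d → Zd d → Zd d → ℂ) : Zd d → Zd d → Zd d → ℂ :=
  fun j k l => Θ (j + v) k (l + v) - Θ j k l

/-- The iterated partial finite difference operator `Δ₂^α` for `α ∈ ℤ^d`: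
in direction `m`, `Δ_{2,m}^t = (Δ₂^{m, sign t})^{|t|}`. -/
def Delta2 {d : ℕ} (α : Zd d) (Θ : Zd d → Zd d → Zd d → ℂ) : Zd d → Zd d → Zd d → ℂ :=
  (List.finRange d).foldr
    (fun m F => (D2 (Pi.single m (Int.sign (α m))))^[(α m).natAbs] ∘ F) id Θ

/-- The iterated partial finite difference operator `Δ₃^β` for `β ∈ ℤ^d`. -/
def Delta3 {d : ℕ} (β : Zd d) (Θ : Zd d → Zd d → Zd d → ℂ) : Zd d → Zd d → Zd d → ℂ :=
  (List.finRange d).foldr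
    (fun m F => (D3 (Pi.single m (Int.sign (β m))))^[(β m).natAbs] ∘ F) id Θ

/-- `|α| = Σ_m |α_m|` for `α ∈ ℤ^d`. -/
def l1norm {d : ℕ} (α : Zd d) : ℝ := ∑ m, |(α m : ℝ)|

/-- The bilinear tensor class `BT^{ω,N}(ℤ^d)`:
`|Δ₂^α Δ₃^β Θ(j,k,ℓ)| ≤ C_{N,α,β} ⟨|j|+|k|+|ℓ|⟩^{ω−|α|−|β|} ⟨|j−k|+|j−ℓ|⟩^{−2N}`. -/
def BT {d : ℕ} (ω : ℝ) (N : ℕ) (Θ : Zd d → Zd d → Zd d → ℂ) : Prop :=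
  ∀ α β : Zd d, ∃ C : ℝ, 0 < C ∧ ∀ j k l : Zd d,
    ‖Delta2 α (Delta3 β Θ) j k l‖ ≤
      C * jb (znorm j + znorm k + znorm l) ^ (ω - l1norm α - l1norm β) *
        jb (znorm (j - k) + znorm (j - l)) ^ (-(2 * (N : ℝ)))

/-- The bilinear tensor class of order zero, `BT^0(ℤ^d) = ∪_{N > d} BT^{0,N}(ℤ^d)`. -/
def BT0 {d : ℕ} (Θ : Zd d → Zd d → Zd d → ℂ) : Prop :=
  ∃ N : ℕ, d < N ∧ BT 0 N Θ

/-- Directional derivative of a function on `ℝ^d × ℝ^d` in the direction `v`. -/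
def pDeriv {d : ℕ} (v : (Fin d → ℝ) × (Fin d → ℝ))
    (F : (Fin d → ℝ) × (Fin d → ℝ) → ℂ) : (Fin d → ℝ) × (Fin d → ℝ) → ℂ :=
  fun p => fderiv ℝ F p v

/-- Iterated partial derivative `∂_x^α` in the first group of variables. -/
def pdx {d : ℕ} (α : Fin d → ℕ) :
    ((Fin d → ℝ) × (Fin d → ℝ) → ℂ) → (Fin d → ℝ) × (Fin d → ℝ) → ℂ :=
  (List.finRange d).foldr (fun m G => (pDeriv (Pi.single m 1, 0))^[α m] ∘ G) id

/-- Iterated partial derivative `∂_y^β` in the second group of variables. -/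
def pdy {d : ℕ} (β : Fin d → ℕ) :
    ((Fin d → ℝ) × (Fin d → ℝ) → ℂ) → (Fin d → ℝ) × (Fin d → ℝ) → ℂ :=
  (List.finRange d).foldr (fun m G => (pDeriv (0, Pi.single m 1))^[β m] ∘ G) id

namespace Aux


lemma jb_pos (x : ℝ) : 0 < jb x := Real.sqrt_pos.2 (by positivity)

lemma one_le_jb (x : ℝ) : 1 ≤ jb x := by
  have h := Real.sq_sqrt (show (0:ℝ) ≤ 1 + x^2 by positivity)
  have h2 := Real.sqrt_nonneg (1 + x^2)
  rw [jb]
  nlinarith [sq_nonneg (Real.sqrt (1+x^2) - 1), sq_nonneg x]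

lemma le_jb (x : ℝ) : x ≤ jb x := by
  rcases le_or_gt x 0 with h | h
  · exact h.trans (jb_pos x).le
  · rw [jb, Real.le_sqrt h.le] <;> nlinarith

lemma jb_mono {x y : ℝ} (hx : 0 ≤ x) (h : x ≤ y) : jb x ≤ jb y :=
  Real.sqrt_le_sqrt (by nlinarith)

lemma jb_add_le (x y : ℝ) : jb (x + y) ≤ Real.sqrt 2 * (jb x * jb y) := by
  have h : 1 + (x+y)^2 ≤ 2 * ((1+x^2) * (1+y^2)) := by nlinarith [sq_nonneg (x - y), sq_nonneg (x*y)]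
  calc jb (x+y) ≤ Real.sqrt (2 * ((1+x^2) * (1+y^2))) := Real.sqrt_le_sqrt h
    _ = Real.sqrt 2 * (jb x * jb y) := by
        rw [Real.sqrt_mul (by norm_num), Real.sqrt_mul (by positivity)]; rfl

lemma peetre (s x y z : ℝ) (hx : 0 ≤ x) (hy : 0 ≤ y) (h1 : x ≤ y + z) (h2 : y ≤ x + z) :
    jb x ^ s ≤ (Real.sqrt 2 * jb z) ^ |s| * jb y ^ s := by
  rcases le_or_gt 0 s with hs | hs
  · rw [abs_of_nonneg hs]
    have h3 : jb x ≤ Real.sqrt 2 * jb z * jb y := by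
      calc jb x ≤ jb (y + z) := jb_mono hx h1
        _ ≤ Real.sqrt 2 * (jb y * jb z) := jb_add_le y z
        _ = Real.sqrt 2 * jb z * jb y := by ring
    calc jb x ^ s ≤ (Real.sqrt 2 * jb z * jb y) ^ s :=
          Real.rpow_le_rpow (jb_pos x).le h3 hs
      _ = (Real.sqrt 2 * jb z) ^ s * jb y ^ s := Real.mul_rpow (mul_nonneg (Real.sqrt_nonneg 2) (jb_pos z).le) (jb_pos y).le
  · rw [abs_of_neg hs]
    have hpos : 0 < Real.sqrt 2 * jb z := mul_pos (Real.sqrt_pos.2 (by norm_num)) (jb_pos z)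
    have h3 : jb y ≤ Real.sqrt 2 * jb z * jb x := by
      calc jb y ≤ jb (x + z) := jb_mono hy h2
        _ ≤ Real.sqrt 2 * (jb x * jb z) := jb_add_le x z
        _ = Real.sqrt 2 * jb x * jb z := by ring
        _ = Real.sqrt 2 * jb z * jb x := by ring
    have h4 : jb y / (Real.sqrt 2 * jb z) ≤ jb x := by
      rw [div_le_iff₀ hpos]; linarith [h3]
    have h5 : jb x ^ s ≤ (jb y / (Real.sqrt 2 * jb z)) ^ s :=
      Real.rpow_le_rpow_of_nonpos (div_pos (jb_pos y) hpos) h4 hs.le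
    calc jb x ^ s ≤ (jb y / (Real.sqrt 2 * jb z)) ^ s := h5
      _ = jb y ^ s / (Real.sqrt 2 * jb z) ^ s := Real.div_rpow (jb_pos y).le hpos.le s
      _ = (Real.sqrt 2 * jb z) ^ (-s) * jb y ^ s := by
          rw [Real.rpow_neg hpos.le]; field_simp
      
lemma jb_prod_le {a b N₁ N₂ : ℝ} (ha : 0 ≤ a) (hb : 0 ≤ b) (h1 : 0 ≤ N₁) (h2 : 0 ≤ N₂) :
    jb a ^ N₁ * jb b ^ N₂ ≤ jb (a + b) ^ (N₁ + N₂) := by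
  rw [Real.rpow_add (jb_pos _)]
  exact mul_le_mul (Real.rpow_le_rpow (jb_pos a).le (jb_mono ha (by linarith)) h1)
    (Real.rpow_le_rpow (jb_pos b).le (jb_mono hb (by linarith)) h2)
    (Real.rpow_nonneg (jb_pos b).le _) (Real.rpow_nonneg (jb_pos _).le _)

lemma jb_inv_prod {a b N₁ N₂ : ℝ} (ha : 0 ≤ a) (hb : 0 ≤ b) (h1 : 0 ≤ N₁) (h2 : 0 ≤ N₂) :
    jb (a + b) ^ (-(N₁ + N₂)) ≤ jb a ^ (-N₁) * jb b ^ (-N₂) := by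
  rw [Real.rpow_neg (jb_pos _).le, Real.rpow_neg (jb_pos _).le, Real.rpow_neg (jb_pos _).le,
    ← mul_inv]
  exact inv_anti₀ (mul_pos (Real.rpow_pos_of_pos (jb_pos a) _) (Real.rpow_pos_of_pos (jb_pos b) _)) (jb_prod_le ha hb h1 h2)

/-- embedding into Euclidean space -/
def emb {d : ℕ} (a : Zd d) : EuclideanSpace ℝ (Fin d) := WithLp.toLp 2 (fun i => (a i : ℝ))

lemma znorm_eq {d : ℕ} (a : Zd d) : znorm a = ‖emb a‖ := by
  rw [EuclideanSpace.norm_eq, znorm]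
  congr 1; apply Finset.sum_congr rfl; intro i _
  rw [emb]; simp [sq_abs]

lemma emb_add {d : ℕ} (a b : Zd d) : emb (a + b) = emb a + emb b := by
  ext i; simp [emb]

lemma emb_sub {d : ℕ} (a b : Zd d) : emb (a - b) = emb a - emb b := by
  ext i; simp [emb]

lemma znorm_nonneg {d : ℕ} (a : Zd d) : 0 ≤ znorm a := Real.sqrt_nonneg _

lemma znorm_tri1 {d : ℕ} (j k : Zd d) : znorm j ≤ znorm k + znorm (j - k) := by
  rw [znorm_eq, znorm_eq, znorm_eq, emb_sub]
  calc ‖emb j‖ = ‖emb k + (emb j - emb k)‖ := by congr 1; abel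
    _ ≤ ‖emb k‖ + ‖emb j - emb k‖ := norm_add_le _ _

lemma znorm_tri2 {d : ℕ} (j k : Zd d) : znorm k ≤ znorm j + znorm (j - k) := by
  rw [znorm_eq, znorm_eq, znorm_eq, emb_sub]
  calc ‖emb k‖ = ‖emb j - (emb j - emb k)‖ := by congr 1; abel
    _ ≤ ‖emb j‖ + ‖emb j - emb k‖ := norm_sub_le _ _

lemma coord_le_znorm {d : ℕ} (m : Zd d) (i : Fin d) : |(m i : ℝ)| ≤ znorm m := by
  rw [znorm, show |(m i : ℝ)| = Real.sqrt ((m i : ℝ)^2) by rw [Real.sqrt_sq_eq_abs]]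
  exact Real.sqrt_le_sqrt (Finset.single_le_sum (f := fun i => ((m i : ℝ))^2)
    (fun _ _ => sq_nonneg _) (Finset.mem_univ i))

lemma znorm_zero {d : ℕ} : znorm (0 : Zd d) = 0 := by simp [znorm]

lemma jb_zero : jb 0 = 1 := by simp [jb]



lemma enorm_tsum_le {ι : Type*} (f : ι → ℂ) :
    (‖∑' i, f i‖₊ : ℝ≥0∞) ≤ ∑' i, (‖f i‖₊ : ℝ≥0∞) := by
  by_cases h : Summable fun i => ‖f i‖₊
  · rw [← ENNReal.coe_tsum h]
    exact_mod_cast nnnorm_tsum_le h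
  · rw [show (∑' i, (‖f i‖₊ : ℝ≥0∞)) = ∞ by
      by_contra hc
      exact h (ENNReal.tsum_coe_ne_top_iff_summable.1 hc)]
    exact le_top

lemma sum1d {u : ℝ} (hu : 1 < u) :
    ∑' n : ℤ, ENNReal.ofReal (jb |(n : ℝ)| ^ (-u)) ≠ ∞ := by
  have hsum : Summable (fun n : ℤ => (2:ℝ)^u * (1 / |(n:ℝ) + (1/2 : ℝ)| ^ u)) :=
    ((Real.summable_one_div_int_add_rpow (1/2 : ℝ) u).2 hu).mul_left _
  have hkey : ∀ n : ℤ, jb |(n:ℝ)| ^ (-u) ≤ (2:ℝ)^u * (1 / |(n:ℝ) + (1/2 : ℝ)| ^ u) := by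
    intro n
    have habs : |(n:ℝ) + (1/2 : ℝ)| ≤ |(n:ℝ)| + (1/2 : ℝ) := by
      calc |(n:ℝ) + 1/2| ≤ |(n:ℝ)| + |(1/2 : ℝ)| := abs_add_le _ _
        _ = |(n:ℝ)| + 1/2 := by norm_num
    have habs0 : (0:ℝ) < |(n:ℝ) + (1/2 : ℝ)| := by
      rcases le_or_gt 0 n with h | h
      · have : (0:ℝ) ≤ (n:ℝ) := by exact_mod_cast h
        rw [abs_of_nonneg (by linarith)]; linarith
      · have hn : n ≤ -1 := by omega
        have : (n:ℝ) ≤ -1 := by exact_mod_cast hn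
        rw [abs_of_neg (by linarith)]; linarith
    have hb2 : |(n:ℝ) + (1/2 : ℝ)| / 2 ≤ jb |(n:ℝ)| := by
      have h1 := one_le_jb |(n:ℝ)|
      have h2 := le_jb |(n:ℝ)|
      linarith
    have h4 : jb |(n:ℝ)| ^ (-u) ≤ (|(n:ℝ) + (1/2 : ℝ)| / 2) ^ (-u) :=
      Real.rpow_le_rpow_of_nonpos (by linarith) hb2 (by linarith)
    have h5 : (|(n:ℝ) + (1/2 : ℝ)| / 2) ^ (-u) = (2:ℝ)^u * (1 / |(n:ℝ) + (1/2 : ℝ)| ^ u) := by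
      rw [Real.rpow_neg (by positivity : (0:ℝ) ≤ |(n:ℝ) + (1/2:ℝ)| / 2),
        Real.div_rpow habs0.le (by norm_num : (0:ℝ) ≤ 2), inv_div, div_eq_mul_inv, one_div]
      rw [one_div]
    linarith [h4, h5.le, h5.ge]
  have hsum2 : Summable (fun n : ℤ => jb |(n:ℝ)| ^ (-u)) :=
    Summable.of_nonneg_of_le (fun n => Real.rpow_nonneg (jb_pos _).le _) hkey hsum
  rw [← ENNReal.ofReal_tsum_of_nonneg (fun n => Real.rpow_nonneg (jb_pos _).le _) hsum2]
  exact ENNReal.ofReal_ne_top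

lemma tsum_pi_prod : ∀ (d : ℕ) (a : ℤ → ℝ≥0∞),
    ∑' m : Zd d, ∏ i, a (m i) = (∑' n : ℤ, a n) ^ d := by
  intro d
  induction d with
  | zero =>
    intro a
    rw [pow_zero, tsum_eq_single (default : Zd 0) (fun b hb => absurd (Subsingleton.elim b default) hb)]
    simp
  | succ n ih =>
    intro a
    rw [← Equiv.tsum_eq (Fin.consEquiv (fun _ : Fin (n+1) => ℤ)) (fun m : Zd (n+1) => ∏ i, a (m i))]
    rw [ENNReal.tsum_prod']
    have : ∀ (x : ℤ) (m : Fin n → ℤ),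
        (∏ i, a ((Fin.consEquiv (fun _ : Fin (n+1) => ℤ)) (x, m) i)) = a x * ∏ i, a (m i) := by
      intro x m
      rw [Fin.prod_univ_succ]
      simp [Fin.consEquiv]
    simp_rw [this, ENNReal.tsum_mul_left, ENNReal.tsum_mul_right, ih a]
    rw [pow_succ]
    ring


lemma K_lt_top {d : ℕ} (hd : 1 ≤ d) {t : ℝ} (ht : (d:ℝ) < t) :
    ∑' m : Zd d, ENNReal.ofReal (jb (znorm m) ^ (-t)) ≠ ∞ := by
  have hd0 : (0:ℝ) < d := by exact_mod_cast hd
  set u := t / d with hu_def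
  have hu : 1 < u := (one_lt_div hd0).2 ht
  have hpt : ∀ m : Zd d, ENNReal.ofReal (jb (znorm m) ^ (-t))
      ≤ ∏ i, ENNReal.ofReal (jb |(m i : ℝ)| ^ (-u)) := by
    intro m
    rw [← ENNReal.ofReal_prod_of_nonneg (fun i _ => Real.rpow_nonneg (jb_pos _).le _)]
    apply ENNReal.ofReal_le_ofReal
    have key : ∏ i, jb |(m i : ℝ)| ^ u ≤ jb (znorm m) ^ t := by
      calc ∏ i, jb |(m i : ℝ)| ^ u ≤ ∏ i : Fin d, jb (znorm m) ^ u := by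
            apply Finset.prod_le_prod (fun i _ => Real.rpow_nonneg (jb_pos _).le _)
            intro i _
            exact Real.rpow_le_rpow (jb_pos _).le
              (jb_mono (abs_nonneg _) (coord_le_znorm m i)) (by positivity)
        _ = (jb (znorm m) ^ u) ^ (d : ℕ) := by rw [Finset.prod_const, Finset.card_univ]; simp
        _ = jb (znorm m) ^ t := by
            rw [← Real.rpow_natCast (jb (znorm m) ^ u) d, ← Real.rpow_mul (jb_pos _).le]
            congr 1
            rw [hu_def, div_mul_cancel₀ t hd0.ne']
    have h1 : (0:ℝ) < ∏ i, jb |(m i : ℝ)| ^ u :=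
      Finset.prod_pos (fun i _ => Real.rpow_pos_of_pos (jb_pos _) _)
    calc jb (znorm m) ^ (-t) = (jb (znorm m) ^ t)⁻¹ := by
          rw [Real.rpow_neg (jb_pos _).le]
      _ ≤ (∏ i, jb |(m i : ℝ)| ^ u)⁻¹ := by
          exact inv_anti₀ h1 key
      _ = ∏ i, jb |(m i : ℝ)| ^ (-u) := by
          rw [← Finset.prod_inv_distrib]
          apply Finset.prod_congr rfl
          intro i _
          rw [Real.rpow_neg (jb_pos _).le]
  refine ne_top_of_le_ne_top ?_ (ENNReal.tsum_le_tsum hpt)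
  rw [tsum_pi_prod d (fun n => ENNReal.ofReal (jb |(n : ℝ)| ^ (-u)))]
  exact ENNReal.pow_ne_top (sum1d hu)

-- basic nestNorm lemmas
lemma nestNorm_mono {ι : Type*} {p : ℝ≥0∞} {F G : ι → ℝ≥0∞} (h : ∀ i, F i ≤ G i) :
    nestNorm p F ≤ nestNorm p G := by
  unfold nestNorm
  split
  · exact iSup_mono h
  · exact ENNReal.rpow_le_rpow
      (ENNReal.tsum_le_tsum fun i => ENNReal.rpow_le_rpow (h i) ENNReal.toReal_nonneg)
      (by positivity)

lemma nestNorm_const_mul {ι : Type*} (p : ℝ≥0∞) (hp : 1 ≤ p) (c : ℝ≥0∞) (F : ι → ℝ≥0∞) :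
    nestNorm p (fun i => c * F i) = c * nestNorm p F := by
  unfold nestNorm
  split
  · exact (ENNReal.mul_iSup c F).symm
  · rename_i h
    have htp : 0 < p.toReal := ENNReal.toReal_pos (by intro h0; rw [h0] at hp; simp at hp) h
    simp_rw [ENNReal.mul_rpow_of_nonneg _ _ htp.le, ENNReal.tsum_mul_left]
    rw [ENNReal.mul_rpow_of_nonneg _ _ (by positivity : (0:ℝ) ≤ 1 / p.toReal),
      ← ENNReal.rpow_mul, mul_one_div_cancel htp.ne', ENNReal.rpow_one]

lemma nestNorm_translate {d : ℕ} (p : ℝ≥0∞) (F : Zd d → ℝ≥0∞) (m : Zd d) :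
    nestNorm p (fun j => F (j - m)) = nestNorm p F := by
  unfold nestNorm
  split
  · apply le_antisymm (iSup_le fun j => le_iSup F (j - m))
    apply iSup_le fun j => ?_
    have := le_iSup (fun j => F (j - m)) (j + m)
    simpa using this
  · congr 1
    exact Equiv.tsum_eq (Equiv.subRight m) (fun j => F j ^ p.toReal)

lemma tsum_translate {d : ℕ} (K : Zd d → ℝ≥0∞) (j : Zd d) :
    ∑' k, K (j - k) = ∑' m, K m :=
  Equiv.tsum_eq (Equiv.subLeft j) K

lemma tsum_translate' {d : ℕ} (K : Zd d → ℝ≥0∞) (k : Zd d) :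
    ∑' j, K (j - k) = ∑' m, K m :=
  Equiv.tsum_eq (Equiv.subRight k) K



lemma tsum_holder {d : ℕ} {a b : ℝ} (hab : a.HolderConjugate b) (A B : Zd d → ℝ≥0∞) :
    ∑' j : Zd d, A j * B j ≤ (∑' j, A j ^ a) ^ (1/a) * (∑' j, B j ^ b) ^ (1/b) := by
  have hA : AEMeasurable A (MeasureTheory.Measure.count) := (measurable_of_countable A).aemeasurable
  have hB : AEMeasurable B (MeasureTheory.Measure.count) := (measurable_of_countable B).aemeasurable
  have h := ENNReal.lintegral_mul_le_Lp_mul_Lq MeasureTheory.Measure.count hab hA hB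
  simpa [MeasureTheory.lintegral_count] using h

lemma nestNorm_one {ι : Type*} (F : ι → ℝ≥0∞) : nestNorm 1 F = ∑' i, F i := by
  simp [nestNorm]

lemma nestNorm_top {ι : Type*} (F : ι → ℝ≥0∞) : nestNorm ∞ F = ⨆ i, F i := by
  simp [nestNorm]

lemma nestNorm_eq {ι : Type*} {p : ℝ≥0∞} (hp : p ≠ ∞) (F : ι → ℝ≥0∞) :
    nestNorm p F = (∑' i, F i ^ p.toReal) ^ (1 / p.toReal) := by
  simp [nestNorm, hp]

-- Hölder for nestNorm
lemma nestNorm_holder {d : ℕ} (p q r : ℝ≥0∞) (hp : 1 ≤ p) (hq : 1 ≤ q) (hr : 1 ≤ r)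
    (hpqr : p⁻¹ + q⁻¹ = r⁻¹) (A B : Zd d → ℝ≥0∞) :
    nestNorm r (fun j => A j * B j) ≤ nestNorm p A * nestNorm q B := by
  have hp0 : p ≠ 0 := fun h => by rw [h] at hp; simp at hp
  have hq0 : q ≠ 0 := fun h => by rw [h] at hq; simp at hq
  have hr0 : r ≠ 0 := fun h => by rw [h] at hr; simp at hr
  by_cases hrtop : r = ∞
  · -- then p = q = ∞
    rw [hrtop, ENNReal.inv_top] at hpqr
    obtain ⟨hp', hq'⟩ := add_eq_zero.1 hpqr
    rw [ENNReal.inv_eq_zero] at hp' hq'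
    subst hrtop; subst hp'; subst hq'
    rw [nestNorm_top, nestNorm_top, nestNorm_top]
    exact iSup_le fun j => mul_le_mul' (le_iSup A j) (le_iSup B j)
  by_cases hptop : p = ∞
  · -- q = r
    rw [hptop, ENNReal.inv_top, zero_add] at hpqr
    have hqr : q = r := by
      have := congrArg (·⁻¹) hpqr
      simpa using this
    subst hqr; subst hptop
    calc nestNorm q (fun j => A j * B j)
        ≤ nestNorm q (fun j => (⨆ i, A i) * B j) :=
          nestNorm_mono fun j => mul_le_mul' (le_iSup A j) le_rfl
      _ = (⨆ i, A i) * nestNorm q B := nestNorm_const_mul q hq _ B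
      _ = nestNorm ∞ A * nestNorm q B := by rw [nestNorm_top]
  by_cases hqtop : q = ∞
  · rw [hqtop, ENNReal.inv_top, add_zero] at hpqr
    have hpr : p = r := by
      have := congrArg (·⁻¹) hpqr
      simpa using this
    subst hpr; subst hqtop
    calc nestNorm p (fun j => A j * B j)
        ≤ nestNorm p (fun j => (⨆ i, B i) * A j) :=
          nestNorm_mono fun j => by rw [mul_comm]; exact mul_le_mul' (le_iSup B j) le_rfl
      _ = (⨆ i, B i) * nestNorm p A := nestNorm_const_mul p hp _ A
      _ = nestNorm p A * nestNorm ∞ B := by rw [nestNorm_top, mul_comm]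
  -- all finite
  have htp : 0 < p.toReal := ENNReal.toReal_pos hp0 hptop
  have htq : 0 < q.toReal := ENNReal.toReal_pos hq0 hqtop
  have htr : 0 < r.toReal := ENNReal.toReal_pos hr0 hrtop
  have hinv : p.toReal⁻¹ + q.toReal⁻¹ = r.toReal⁻¹ := by
    have h1 : (p⁻¹ + q⁻¹).toReal = (r⁻¹).toReal := by rw [hpqr]
    rw [ENNReal.toReal_add (by simp [hp0]) (by simp [hq0])] at h1
    simpa [ENNReal.toReal_inv] using h1
  have hrp : r.toReal < p.toReal := by
    have h2 : p.toReal⁻¹ < r.toReal⁻¹ := by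
      rw [← hinv]
      have : 0 < q.toReal⁻¹ := by positivity
      linarith
    exact (inv_lt_inv₀ (by positivity) (by positivity)).1 h2
  set a := p.toReal / r.toReal with ha_def
  set b := q.toReal / r.toReal with hb_def
  have hab : a.HolderConjugate b := by
    rw [Real.holderConjugate_iff]
    constructor
    · rw [ha_def]
      exact (one_lt_div htr).2 hrp
    · rw [ha_def, hb_def]
      have h3 := hinv
      field_simp [htp.ne', htq.ne', htr.ne'] at h3
      field_simp
      nlinarith [h3]
  have key : ∑' j, (A j * B j) ^ r.toReal
      ≤ (∑' j, A j ^ p.toReal) ^ (1/a) * (∑' j, B j ^ q.toReal) ^ (1/b) := by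
    have := tsum_holder hab (fun j => A j ^ r.toReal) (fun j => B j ^ r.toReal)
    calc ∑' j, (A j * B j) ^ r.toReal
        = ∑' j, (A j ^ r.toReal) * (B j ^ r.toReal) := by
          simp_rw [ENNReal.mul_rpow_of_nonneg _ _ htr.le]
      _ ≤ (∑' j, (A j ^ r.toReal) ^ a) ^ (1/a) * (∑' j, (B j ^ r.toReal) ^ b) ^ (1/b) := this
      _ = (∑' j, A j ^ p.toReal) ^ (1/a) * (∑' j, B j ^ q.toReal) ^ (1/b) := by
          congr 1
          · congr 1; apply tsum_congr; intro j
            rw [← ENNReal.rpow_mul]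
            congr 1
            rw [ha_def]; field_simp; try ring
          · congr 1; apply tsum_congr; intro j
            rw [← ENNReal.rpow_mul]
            congr 1
            rw [hb_def]; field_simp; try ring
  rw [nestNorm_eq hrtop, nestNorm_eq hptop, nestNorm_eq hqtop]
  calc (∑' j, (A j * B j) ^ r.toReal) ^ (1 / r.toReal)
      ≤ ((∑' j, A j ^ p.toReal) ^ (1/a) * (∑' j, B j ^ q.toReal) ^ (1/b)) ^ (1 / r.toReal) :=
        ENNReal.rpow_le_rpow key (by positivity)
    _ = (∑' j, A j ^ p.toReal) ^ (1 / p.toReal) * (∑' j, B j ^ q.toReal) ^ (1 / q.toReal) := by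
        rw [ENNReal.mul_rpow_of_nonneg _ _ (by positivity : (0:ℝ) ≤ 1 / r.toReal),
          ← ENNReal.rpow_mul, ← ENNReal.rpow_mul]
        congr 2
        · rw [ha_def]; field_simp; try ring
        · rw [hb_def]; field_simp; try ring


lemma young {d : ℕ} (p : ℝ≥0∞) (hp : 1 ≤ p) (K F : Zd d → ℝ≥0∞) :
    nestNorm p (fun j => ∑' k, K (j - k) * F k) ≤ (∑' m, K m) * nestNorm p F := by
  set S := ∑' m, K m with hS_def
  by_cases hptop : p = ∞
  · subst hptop
    rw [nestNorm_top, nestNorm_top]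
    apply iSup_le fun j => ?_
    calc ∑' k, K (j - k) * F k ≤ ∑' k, K (j - k) * (⨆ i, F i) :=
          ENNReal.tsum_le_tsum fun k => mul_le_mul' le_rfl (le_iSup F k)
      _ = (∑' k, K (j - k)) * (⨆ i, F i) := ENNReal.tsum_mul_right
      _ = S * ⨆ i, F i := by rw [tsum_translate]
  have hp0 : p ≠ 0 := fun h => by rw [h] at hp; simp at hp
  have htp : 0 < p.toReal := ENNReal.toReal_pos hp0 hptop
  by_cases hp1 : p = 1
  · subst hp1
    simp only [nestNorm_eq (by norm_num : (1:ℝ≥0∞) ≠ ∞), ENNReal.toReal_one,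
      ENNReal.rpow_one, one_div, inv_one]
    apply le_of_eq
    calc ∑' j, ∑' k, K (j - k) * F k = ∑' k, ∑' j, K (j - k) * F k := ENNReal.tsum_comm
      _ = ∑' k, (∑' j, K (j - k)) * F k := by
          apply tsum_congr; intro k; rw [ENNReal.tsum_mul_right]
      _ = ∑' k, S * F k := by
          apply tsum_congr; intro k; rw [tsum_translate']
      _ = S * ∑' k, F k := ENNReal.tsum_mul_left
  -- 1 < p < ∞
  have htp1 : 1 < p.toReal := by
    rcases lt_or_eq_of_le hp with h | h
    · have h1 : (1:ℝ≥0∞).toReal < p.toReal := ENNReal.toReal_strict_mono hptop h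
      simpa using h1
    · exact absurd h.symm hp1
  have hab : p.toReal.HolderConjugate (Real.conjExponent p.toReal) :=
    Real.HolderConjugate.conjExponent htp1
  set b := Real.conjExponent p.toReal with hb_def
  have hb0 : 0 < b := hab.symm.pos
  -- pointwise bound on the convolution
  have hconv : ∀ j : Zd d, (∑' k, K (j - k) * F k) ^ p.toReal
      ≤ S ^ (p.toReal / b) * ∑' k, K (j - k) * F k ^ p.toReal := by
    intro j
    have hsplit : ∀ k, K (j - k) * F k
        = (K (j - k) ^ (1/b)) * (K (j - k) ^ (1/p.toReal) * F k) := by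
      intro k
      rw [← mul_assoc, ← ENNReal.rpow_add_of_nonneg _ _ (by positivity) (by positivity)]
      rw [show 1/b + 1/p.toReal = 1 by
        have := hab.inv_add_inv_eq_one; rw [one_div, one_div]; linarith]
      rw [ENNReal.rpow_one]
    have h1 : ∑' k, K (j - k) * F k
        ≤ (∑' k, (K (j - k) ^ (1/b)) ^ b) ^ (1/b)
          * (∑' k, (K (j - k) ^ (1/p.toReal) * F k) ^ p.toReal) ^ (1/p.toReal) := by
      calc ∑' k, K (j - k) * F k
          = ∑' k, (K (j - k) ^ (1/b)) * (K (j - k) ^ (1/p.toReal) * F k) := tsum_congr hsplit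
        _ ≤ _ := by
            have := tsum_holder hab.symm (fun k => K (j - k) ^ (1/b))
              (fun k => K (j - k) ^ (1/p.toReal) * F k)
            exact this
    have h2 : (∑' k, (K (j - k) ^ (1/b)) ^ b) = S := by
      rw [hS_def, ← tsum_translate K j]
      apply tsum_congr; intro k
      rw [← ENNReal.rpow_mul, one_div, inv_mul_cancel₀ hb0.ne', ENNReal.rpow_one]
    have h3 : (∑' k, (K (j - k) ^ (1/p.toReal) * F k) ^ p.toReal)
        = ∑' k, K (j - k) * F k ^ p.toReal := by
      apply tsum_congr; intro k
      rw [ENNReal.mul_rpow_of_nonneg _ _ htp.le, ← ENNReal.rpow_mul, one_div,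
        inv_mul_cancel₀ htp.ne', ENNReal.rpow_one]
    rw [h2, h3] at h1
    calc (∑' k, K (j - k) * F k) ^ p.toReal
        ≤ (S ^ (1/b) * (∑' k, K (j - k) * F k ^ p.toReal) ^ (1/p.toReal)) ^ p.toReal :=
          ENNReal.rpow_le_rpow h1 htp.le
      _ = S ^ (p.toReal / b) * ∑' k, K (j - k) * F k ^ p.toReal := by
          rw [ENNReal.mul_rpow_of_nonneg _ _ htp.le, ← ENNReal.rpow_mul, ← ENNReal.rpow_mul,
            show 1/b * p.toReal = p.toReal / b by ring,
            show 1/p.toReal * p.toReal = 1 by field_simp, ENNReal.rpow_one]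
  -- sum over j
  have hsum : (∑' j, (∑' k, K (j - k) * F k) ^ p.toReal)
      ≤ S ^ p.toReal * ∑' k, F k ^ p.toReal := by
    calc (∑' j, (∑' k, K (j - k) * F k) ^ p.toReal)
        ≤ ∑' j, S ^ (p.toReal / b) * ∑' k, K (j - k) * F k ^ p.toReal :=
          ENNReal.tsum_le_tsum hconv
      _ = S ^ (p.toReal / b) * ∑' j, ∑' k, K (j - k) * F k ^ p.toReal := ENNReal.tsum_mul_left
      _ = S ^ (p.toReal / b) * (S * ∑' k, F k ^ p.toReal) := by
          congr 1
          calc ∑' j, ∑' k, K (j - k) * F k ^ p.toReal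
              = ∑' k, ∑' j, K (j - k) * F k ^ p.toReal := ENNReal.tsum_comm
            _ = ∑' k, S * F k ^ p.toReal := by
                apply tsum_congr; intro k
                rw [ENNReal.tsum_mul_right, tsum_translate']
            _ = S * ∑' k, F k ^ p.toReal := ENNReal.tsum_mul_left
      _ = S ^ p.toReal * ∑' k, F k ^ p.toReal := by
          have e : S ^ (p.toReal / b) * S = S ^ p.toReal := by
            nth_rewrite 2 [← ENNReal.rpow_one S]
            rw [← ENNReal.rpow_add_of_nonneg _ _ (div_nonneg htp.le hb0.le) zero_le_one]
            congr 1
            have h := hab.inv_add_inv_eq_one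
            field_simp [htp.ne', hb0.ne'] at h ⊢
            linarith [h]
          rw [← mul_assoc, e]
  rw [nestNorm_eq hptop, nestNorm_eq hptop]
  calc (∑' j, (∑' k, K (j - k) * F k) ^ p.toReal) ^ (1 / p.toReal)
      ≤ (S ^ p.toReal * ∑' k, F k ^ p.toReal) ^ (1 / p.toReal) :=
        ENNReal.rpow_le_rpow hsum (by positivity)
    _ = S * (∑' k, F k ^ p.toReal) ^ (1 / p.toReal) := by
        rw [ENNReal.mul_rpow_of_nonneg _ _ (by positivity : (0:ℝ) ≤ 1 / p.toReal),
          ← ENNReal.rpow_mul, mul_one_div_cancel htp.ne', ENNReal.rpow_one]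


lemma theta_bound {d : ℕ} (N : ℝ) (Θ : Zd d → Zd d → Zd d → ℂ)
    (hΘ : tensorNorm 0 N Θ ≠ ∞) (j k l : Zd d) :
    ‖Θ j k l‖ ≤ (tensorNorm 0 N Θ).toReal * jb (znorm (j-k) + znorm (j-l)) ^ (-(2*N)) := by
  have h1 : ENNReal.ofReal (‖Θ j k l‖ * jb (znorm (j-k) + znorm (j-l)) ^ (2*N))
      ≤ tensorNorm 0 N Θ := by
    unfold tensorNorm
    refine le_trans ?_ (le_iSup _ j)
    refine le_trans ?_ (le_iSup _ k)
    refine le_trans ?_ (le_iSup _ l)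
    simp [Real.rpow_zero]
  rw [ENNReal.ofReal_le_iff_le_toReal hΘ] at h1
  have hX : 0 < jb (znorm (j-k) + znorm (j-l)) ^ (2*N) := Real.rpow_pos_of_pos (jb_pos _) _
  rw [Real.rpow_neg (jb_pos _).le, ← div_eq_mul_inv, le_div_iff₀ hX]
  exact h1

lemma key_real {d : ℕ} (s₁ s₂ N u M : ℝ) (hM : 0 ≤ M) (hu0 : 0 < u)
    (hsum2N : (u + |s₁|) + (u + |s₂|) = 2*N)
    (Θ : Zd d → Zd d → Zd d → ℂ) (j k l : Zd d)
    (hbd : ‖Θ j k l‖ ≤ M * jb (znorm (j-k) + znorm (j-l)) ^ (-(2*N))) :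
    jb (znorm j) ^ (s₁+s₂) * ‖Θ j k l‖ ≤
      (Real.sqrt 2 ^ |s₁| * Real.sqrt 2 ^ |s₂| * (M+1)) *
        ((jb (znorm (j-k)) ^ (-u) * jb (znorm k) ^ s₁) *
         (jb (znorm (j-l)) ^ (-u) * jb (znorm l) ^ s₂)) := by
  have hp1 : jb (znorm j) ^ s₁ ≤ (Real.sqrt 2 * jb (znorm (j-k))) ^ |s₁| * jb (znorm k) ^ s₁ :=
    peetre s₁ _ _ _ (znorm_nonneg _) (znorm_nonneg _) (znorm_tri1 j k) (znorm_tri2 j k)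
  have hp2 : jb (znorm j) ^ s₂ ≤ (Real.sqrt 2 * jb (znorm (j-l))) ^ |s₂| * jb (znorm l) ^ s₂ :=
    peetre s₂ _ _ _ (znorm_nonneg _) (znorm_nonneg _) (znorm_tri1 j l) (znorm_tri2 j l)
  have hA : jb (znorm j) ^ (s₁+s₂)
      ≤ ((Real.sqrt 2 * jb (znorm (j-k))) ^ |s₁| * jb (znorm k) ^ s₁)
        * ((Real.sqrt 2 * jb (znorm (j-l))) ^ |s₂| * jb (znorm l) ^ s₂) := by
    rw [Real.rpow_add (jb_pos _)]
    exact mul_le_mul hp1 hp2 (Real.rpow_nonneg (jb_pos _).le _)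
      (mul_nonneg (Real.rpow_nonneg (mul_nonneg (Real.sqrt_nonneg 2) (jb_pos _).le) _)
        (Real.rpow_nonneg (jb_pos _).le _))
  have hB : ‖Θ j k l‖ ≤ (M+1) * (jb (znorm (j-k)) ^ (-(u+|s₁|)) * jb (znorm (j-l)) ^ (-(u+|s₂|))) := by
    calc ‖Θ j k l‖ ≤ M * jb (znorm (j-k) + znorm (j-l)) ^ (-(2*N)) := hbd
      _ ≤ (M+1) * jb (znorm (j-k) + znorm (j-l)) ^ (-(2*N)) :=
          mul_le_mul_of_nonneg_right (by linarith) (Real.rpow_nonneg (jb_pos _).le _)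
      _ ≤ (M+1) * (jb (znorm (j-k)) ^ (-(u+|s₁|)) * jb (znorm (j-l)) ^ (-(u+|s₂|))) := by
          apply mul_le_mul_of_nonneg_left ?_ (by linarith)
          rw [← hsum2N]
          exact jb_inv_prod (znorm_nonneg _) (znorm_nonneg _)
            (by positivity) (by positivity)
  have e1 : (Real.sqrt 2 * jb (znorm (j-k))) ^ |s₁|
      = Real.sqrt 2 ^ |s₁| * jb (znorm (j-k)) ^ |s₁| :=
    Real.mul_rpow (Real.sqrt_nonneg 2) (jb_pos _).le
  have e2 : (Real.sqrt 2 * jb (znorm (j-l))) ^ |s₂|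
      = Real.sqrt 2 ^ |s₂| * jb (znorm (j-l)) ^ |s₂| :=
    Real.mul_rpow (Real.sqrt_nonneg 2) (jb_pos _).le
  have e3 : jb (znorm (j-k)) ^ |s₁| * jb (znorm (j-k)) ^ (-(u+|s₁|)) = jb (znorm (j-k)) ^ (-u) := by
    rw [← Real.rpow_add (jb_pos _)]; congr 1; ring
  have e4 : jb (znorm (j-l)) ^ |s₂| * jb (znorm (j-l)) ^ (-(u+|s₂|)) = jb (znorm (j-l)) ^ (-u) := by
    rw [← Real.rpow_add (jb_pos _)]; congr 1; ring
  calc jb (znorm j) ^ (s₁+s₂) * ‖Θ j k l‖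
      ≤ (((Real.sqrt 2 * jb (znorm (j-k))) ^ |s₁| * jb (znorm k) ^ s₁)
          * ((Real.sqrt 2 * jb (znorm (j-l))) ^ |s₂| * jb (znorm l) ^ s₂))
        * ((M+1) * (jb (znorm (j-k)) ^ (-(u+|s₁|)) * jb (znorm (j-l)) ^ (-(u+|s₂|)))) := by
        apply mul_le_mul hA hB (norm_nonneg _)
        exact mul_nonneg (mul_nonneg (Real.rpow_nonneg (mul_nonneg (Real.sqrt_nonneg 2) (jb_pos _).le) _) (Real.rpow_nonneg (jb_pos _).le _))
          (mul_nonneg (Real.rpow_nonneg (mul_nonneg (Real.sqrt_nonneg 2) (jb_pos _).le) _) (Real.rpow_nonneg (jb_pos _).le _))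
    _ = (Real.sqrt 2 ^ |s₁| * Real.sqrt 2 ^ |s₂| * (M+1)) *
        (((jb (znorm (j-k)) ^ |s₁| * jb (znorm (j-k)) ^ (-(u+|s₁|))) * jb (znorm k) ^ s₁) *
         ((jb (znorm (j-l)) ^ |s₂| * jb (znorm (j-l)) ^ (-(u+|s₂|))) * jb (znorm l) ^ s₂)) := by
        rw [e1, e2]; ring
    _ = (Real.sqrt 2 ^ |s₁| * Real.sqrt 2 ^ |s₂| * (M+1)) *
        ((jb (znorm (j-k)) ^ (-u) * jb (znorm k) ^ s₁) *
         (jb (znorm (j-l)) ^ (-u) * jb (znorm l) ^ s₂)) := by rw [e3, e4]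


/-- kernel -/
def Kker {d : ℕ} (u : ℝ) : Zd d → ℝ≥0∞ := fun m => ENNReal.ofReal (jb (znorm m) ^ (-u))
/-- weighted modulus -/
def Wf {d : ℕ} (s : ℝ) (f : Zd d → ℂ) : Zd d → ℝ≥0∞ :=
  fun k => ENNReal.ofReal (jb (znorm k) ^ s * ‖f k‖)

lemma master_pointwise {d : ℕ} (s₁ s₂ N u M : ℝ) (hM : 0 ≤ M) (hu0 : 0 < u)
    (hsum2N : (u + |s₁|) + (u + |s₂|) = 2*N)
    (Θ : Zd d → Zd d → Zd d → ℂ)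
    (hbd : ∀ j k l : Zd d, ‖Θ j k l‖ ≤ M * jb (znorm (j-k) + znorm (j-l)) ^ (-(2*N)))
    (f g : Zd d → ℂ) (j : Zd d) :
    ENNReal.ofReal (jb (znorm j) ^ (s₁+s₂) * ‖Tbil Θ f g j‖)
      ≤ ENNReal.ofReal (Real.sqrt 2 ^ |s₁| * Real.sqrt 2 ^ |s₂| * (M+1)) *
        ((∑' k, Kker u (j - k) * Wf s₁ f k) * (∑' l, Kker u (j - l) * Wf s₂ g l)) := by
  set c₀ := Real.sqrt 2 ^ |s₁| * Real.sqrt 2 ^ |s₂| * (M+1) with hc₀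
  have hofj : 0 ≤ jb (znorm j) ^ (s₁+s₂) := Real.rpow_nonneg (jb_pos _).le _
  have hT : ENNReal.ofReal ‖Tbil Θ f g j‖
      ≤ ∑' k, ∑' l, ENNReal.ofReal (‖Θ j k l‖ * ‖f k‖ * ‖g l‖) := by
    rw [show Tbil Θ f g j = ∑' k, ∑' l, Θ j k l * f k * g l from rfl,
      ofReal_norm]
    refine le_trans (enorm_tsum_le _) (ENNReal.tsum_le_tsum fun k => ?_)
    refine le_trans (enorm_tsum_le _) (ENNReal.tsum_le_tsum fun l => ?_)
    rw [← ENNReal.ofReal_coe_nnreal, coe_nnnorm, norm_mul, norm_mul]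
  have core : ∀ k l : Zd d,
      ENNReal.ofReal (jb (znorm j) ^ (s₁+s₂)) * ENNReal.ofReal (‖Θ j k l‖ * ‖f k‖ * ‖g l‖)
        ≤ ENNReal.ofReal c₀ * ((Kker u (j - k) * Wf s₁ f k) * (Kker u (j - l) * Wf s₂ g l)) := by
    intro k l
    have hsplit : ENNReal.ofReal (‖Θ j k l‖ * ‖f k‖ * ‖g l‖)
        = ENNReal.ofReal ‖Θ j k l‖ * ENNReal.ofReal ‖f k‖ * ENNReal.ofReal ‖g l‖ := by
      rw [ENNReal.ofReal_mul (mul_nonneg (norm_nonneg _) (norm_nonneg _)),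
        ENNReal.ofReal_mul (norm_nonneg _)]
    have hkey := key_real s₁ s₂ N u M hM hu0 hsum2N Θ j k l (hbd j k l)
    have hWsplit1 : Wf s₁ f k = ENNReal.ofReal (jb (znorm k) ^ s₁) * ENNReal.ofReal ‖f k‖ := by
      rw [Wf, ← ENNReal.ofReal_mul (Real.rpow_nonneg (jb_pos _).le _)]
    have hWsplit2 : Wf s₂ g l = ENNReal.ofReal (jb (znorm l) ^ s₂) * ENNReal.ofReal ‖g l‖ := by
      rw [Wf, ← ENNReal.ofReal_mul (Real.rpow_nonneg (jb_pos _).le _)]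
    calc ENNReal.ofReal (jb (znorm j) ^ (s₁+s₂)) * ENNReal.ofReal (‖Θ j k l‖ * ‖f k‖ * ‖g l‖)
        = (ENNReal.ofReal (jb (znorm j) ^ (s₁+s₂)) * ENNReal.ofReal ‖Θ j k l‖)
            * (ENNReal.ofReal ‖f k‖ * ENNReal.ofReal ‖g l‖) := by rw [hsplit]; ring
      _ = ENNReal.ofReal (jb (znorm j) ^ (s₁+s₂) * ‖Θ j k l‖)
            * (ENNReal.ofReal ‖f k‖ * ENNReal.ofReal ‖g l‖) := by
          rw [ENNReal.ofReal_mul hofj]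
      _ ≤ ENNReal.ofReal (c₀ * ((jb (znorm (j-k)) ^ (-u) * jb (znorm k) ^ s₁) *
            (jb (znorm (j-l)) ^ (-u) * jb (znorm l) ^ s₂)))
            * (ENNReal.ofReal ‖f k‖ * ENNReal.ofReal ‖g l‖) :=
          mul_le_mul' (ENNReal.ofReal_le_ofReal hkey) le_rfl
      _ = (ENNReal.ofReal c₀ * ((ENNReal.ofReal (jb (znorm (j-k)) ^ (-u)) * ENNReal.ofReal (jb (znorm k) ^ s₁)) *
            (ENNReal.ofReal (jb (znorm (j-l)) ^ (-u)) * ENNReal.ofReal (jb (znorm l) ^ s₂))))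
            * (ENNReal.ofReal ‖f k‖ * ENNReal.ofReal ‖g l‖) := by
          rw [ENNReal.ofReal_mul (by positivity : (0:ℝ) ≤ c₀),
            ENNReal.ofReal_mul (mul_nonneg (Real.rpow_nonneg (jb_pos _).le _) (Real.rpow_nonneg (jb_pos _).le _)),
            ENNReal.ofReal_mul (Real.rpow_nonneg (jb_pos _).le _),
            ENNReal.ofReal_mul (Real.rpow_nonneg (jb_pos _).le _)]
      _ = ENNReal.ofReal c₀ * ((Kker u (j - k) * Wf s₁ f k) * (Kker u (j - l) * Wf s₂ g l)) := by
          rw [hWsplit1, hWsplit2, Kker, Kker]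
          ring
  calc ENNReal.ofReal (jb (znorm j) ^ (s₁+s₂) * ‖Tbil Θ f g j‖)
      = ENNReal.ofReal (jb (znorm j) ^ (s₁+s₂)) * ENNReal.ofReal ‖Tbil Θ f g j‖ :=
        ENNReal.ofReal_mul hofj
    _ ≤ ENNReal.ofReal (jb (znorm j) ^ (s₁+s₂)) *
          ∑' k, ∑' l, ENNReal.ofReal (‖Θ j k l‖ * ‖f k‖ * ‖g l‖) := mul_le_mul' le_rfl hT
    _ = ∑' k, ∑' l, ENNReal.ofReal (jb (znorm j) ^ (s₁+s₂)) * ENNReal.ofReal (‖Θ j k l‖ * ‖f k‖ * ‖g l‖) := by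
        rw [← ENNReal.tsum_mul_left]
        exact tsum_congr fun k => (ENNReal.tsum_mul_left).symm
    _ ≤ ∑' k, ∑' l, ENNReal.ofReal c₀ * ((Kker u (j - k) * Wf s₁ f k) * (Kker u (j - l) * Wf s₂ g l)) :=
        ENNReal.tsum_le_tsum fun k => ENNReal.tsum_le_tsum fun l => core k l
    _ = ∑' k, ENNReal.ofReal c₀ * ((Kker u (j - k) * Wf s₁ f k) * ∑' l, Kker u (j - l) * Wf s₂ g l) :=
        tsum_congr fun k => by rw [ENNReal.tsum_mul_left, ENNReal.tsum_mul_left]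
    _ = ENNReal.ofReal c₀ * ((∑' k, Kker u (j - k) * Wf s₁ f k) * (∑' l, Kker u (j - l) * Wf s₂ g l)) := by
        rw [ENNReal.tsum_mul_left, ENNReal.tsum_mul_right]


lemma main {d : ℕ} (hd : 1 ≤ d) (s₁ s₂ N : ℝ)
    (Θ : Zd d → Zd d → Zd d → ℂ)
    (hΘ : tensorNorm 0 N Θ ≠ ∞)
    (hN : N > (d : ℝ) + (|s₁| + |s₂|) / 2)
    (p q r : ℝ≥0∞) (hp : 1 ≤ p) (hq : 1 ≤ q) (hr : 1 ≤ r)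
    (hpqr : p⁻¹ + q⁻¹ = r⁻¹) :
    ∃ C : ℝ, 0 < C ∧ ∀ f g : Zd d → ℂ,
        wlpNorm r (s₁ + s₂) (Tbil Θ f g) ≤
          ENNReal.ofReal C * wlpNorm p s₁ f * wlpNorm q s₂ g := by
  set M := (tensorNorm 0 N Θ).toReal with hM_def
  have hM : 0 ≤ M := ENNReal.toReal_nonneg
  set u := (d:ℝ) + (N - d - (|s₁| + |s₂|)/2) with hu_def
  have hud : (d:ℝ) < u := by rw [hu_def]; linarith
  have hd0 : (0:ℝ) < (d:ℝ) := by exact_mod_cast hd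
  have hu0 : 0 < u := lt_trans hd0 hud
  have hsum2N : (u + |s₁|) + (u + |s₂|) = 2*N := by rw [hu_def]; ring
  set c₀ := Real.sqrt 2 ^ |s₁| * Real.sqrt 2 ^ |s₂| * (M+1) with hc₀_def
  have hc₀ : 0 < c₀ := by
    have h2 : (0:ℝ) < Real.sqrt 2 := Real.sqrt_pos.2 (by norm_num)
    have := Real.rpow_pos_of_pos h2 |s₁|
    have := Real.rpow_pos_of_pos h2 |s₂|
    positivity
  set S := ∑' m : Zd d, Kker u m with hS_def
  have hSne : S ≠ ∞ := K_lt_top hd hud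
  have hS1 : 1 ≤ S := by
    have hK0 : Kker u (0 : Zd d) = 1 := by
      rw [Kker, znorm_zero, jb_zero, Real.one_rpow, ENNReal.ofReal_one]
    calc (1:ℝ≥0∞) = Kker u (0 : Zd d) := hK0.symm
      _ ≤ S := ENNReal.le_tsum 0
  have hS0 : S ≠ 0 := fun h => by rw [h] at hS1; simp at hS1
  have hSpos : 0 < S.toReal := ENNReal.toReal_pos hS0 hSne
  refine ⟨c₀ * S.toReal * S.toReal, by positivity, fun f g => ?_⟩
  have hbd : ∀ j k l : Zd d, ‖Θ j k l‖ ≤ M * jb (znorm (j-k) + znorm (j-l)) ^ (-(2*N)) :=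
    fun j k l => theta_bound N Θ hΘ j k l
  have hfinalC : ENNReal.ofReal c₀ * (S * S)
      = ENNReal.ofReal (c₀ * S.toReal * S.toReal) := by
    rw [ENNReal.ofReal_mul (by positivity : (0:ℝ) ≤ c₀ * S.toReal),
      ENNReal.ofReal_mul hc₀.le, ENNReal.ofReal_toReal hSne]
    ring
  calc wlpNorm r (s₁ + s₂) (Tbil Θ f g)
      = nestNorm r (fun j => ENNReal.ofReal (jb (znorm j) ^ (s₁+s₂) * ‖Tbil Θ f g j‖)) := rfl
    _ ≤ nestNorm r (fun j => ENNReal.ofReal c₀ *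
          ((∑' k, Kker u (j - k) * Wf s₁ f k) * (∑' l, Kker u (j - l) * Wf s₂ g l))) :=
        nestNorm_mono fun j => master_pointwise s₁ s₂ N u M hM hu0 hsum2N Θ hbd f g j
    _ = ENNReal.ofReal c₀ * nestNorm r (fun j =>
          (∑' k, Kker u (j - k) * Wf s₁ f k) * (∑' l, Kker u (j - l) * Wf s₂ g l)) :=
        nestNorm_const_mul r hr _ _
    _ ≤ ENNReal.ofReal c₀ * (nestNorm p (fun j => ∑' k, Kker u (j - k) * Wf s₁ f k)
          * nestNorm q (fun j => ∑' l, Kker u (j - l) * Wf s₂ g l)) :=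
        mul_le_mul' le_rfl (nestNorm_holder p q r hp hq hr hpqr _ _)
    _ ≤ ENNReal.ofReal c₀ * ((S * nestNorm p (Wf s₁ f)) * (S * nestNorm q (Wf s₂ g))) :=
        mul_le_mul' le_rfl (mul_le_mul' (young p hp _ _) (young q hq _ _))
    _ = (ENNReal.ofReal c₀ * (S * S)) * (nestNorm p (Wf s₁ f) * nestNorm q (Wf s₂ g)) := by
        ring
    _ = ENNReal.ofReal (c₀ * S.toReal * S.toReal) * wlpNorm p s₁ f * wlpNorm q s₂ g := by
        rw [hfinalC]
        rw [show nestNorm p (Wf s₁ f) = wlpNorm p s₁ f from rfl,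
          show nestNorm q (Wf s₂ g) = wlpNorm q s₂ g from rfl]
        ring

end Aux

/-- Corollary 2: if `‖Θ‖_{0,N} < ∞` for some `N > d + (|s₁|+|s₂|)/2`, then
`𝒯_Θ : ℓ^p_{s₁} × ℓ^q_{s₂} → ℓ^r_{s₁+s₂}` is bounded; in particular (the case where
`N > d`, applied with `s₁ = s₂ = 0`), `𝒯_Θ : ℓ^p × ℓ^q → ℓ^r` is bounded. -/
theorem stmt_3 {d : ℕ} (hd : 1 ≤ d) (s₁ s₂ N : ℝ)
    (Θ : Zd d → Zd d → Zd d → ℂ)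
    (hΘ : tensorNorm 0 N Θ ≠ ∞)
    (hN : N > (d : ℝ) + (|s₁| + |s₂|) / 2)
    (p q r : ℝ≥0∞) (hp : 1 ≤ p) (hq : 1 ≤ q) (hr : 1 ≤ r)
    (hpqr : p⁻¹ + q⁻¹ = r⁻¹) :
    (∃ C : ℝ, 0 < C ∧ ∀ f g : Zd d → ℂ,
        wlpNorm r (s₁ + s₂) (Tbil Θ f g) ≤
          ENNReal.ofReal C * wlpNorm p s₁ f * wlpNorm q s₂ g) ∧
    ((d : ℝ) < N → ∃ C : ℝ, 0 < C ∧ ∀ f g : Zd d → ℂ,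
        lpNorm r (Tbil Θ f g) ≤ ENNReal.ofReal C * lpNorm p f * lpNorm q g) := by
  constructor
  · exact Aux.main hd s₁ s₂ N Θ hΘ hN p q r hp hq hr hpqr
  · intro hdN
    obtain ⟨C, hC, h⟩ := Aux.main hd 0 0 N Θ hΘ (by simpa using hdN) p q r hp hq hr hpqr
    refine ⟨C, hC, fun f g => ?_⟩
    have e : ∀ (pp : ℝ≥0∞) (h : Zd d → ℂ), lpNorm pp h = wlpNorm pp (0:ℝ) h := by
      intro pp hfun
      rw [lpNorm, wlpNorm]
      congr 1
      funext k
      rw [Real.rpow_zero, one_mul]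
    rw [e r, e p, e q]
    simpa using h f g
end
end

section
/- Let d ≥ 1, s₁, s₂, ω₁, ω₂ ∈ ℝ. Suppose the tensor Θ: ℤ^d × ℤ^d × ℤ^d → ℂ satisfies ‖Θ‖_{ω₁,ω₂,N} := sup_{j,k,ℓ∈ℤ^d} |Θ(j,k,ℓ)| ⟨|j−k|+|j−ℓ|⟩^{2N} / (⟨|j|+|k|⟩^{ω₁} ⟨|j|+|ℓ|⟩^{ω₂}) < ∞ for some N > d + (1/2)(max(ω₁,0) + max(ω₂,0)) + (1/2)(|s₁+ω₁| + |s₂+ω₂|). Then 𝒯_Θ is a bounded bilinear operator from ℓ^p_{s₁+ω₁}(ℤ^d) × ℓ^q_{s₂+ω₂}(ℤ^d) to ℓ^r_{s₁+s₂}(ℤ^d) for any 1 ≤ p, q, r ≤ ∞ with 1/p + 1/q = 1/r. -/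
open scoped ENNReal NNReal BigOperators

noncomputable section

section AuxReal

open Real

lemma jb_pos (x : ℝ) : 0 < jb x := Real.sqrt_pos.2 (by positivity)

lemma jb_nonneg (x : ℝ) : 0 ≤ jb x := (jb_pos x).le

lemma one_le_jb (x : ℝ) : 1 ≤ jb x := by
  have h := Real.sqrt_le_sqrt (show (1:ℝ) ≤ 1 + x ^ 2 by nlinarith)
  simpa [jb] using h

lemma jb_le_jb {x y : ℝ} (hxy : x ≤ y) (hx : 0 ≤ x) : jb x ≤ jb y :=
  Real.sqrt_le_sqrt (by nlinarith)

lemma sqrt2_pos : (0:ℝ) < Real.sqrt 2 := by positivity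

lemma one_le_sqrt2 : (1:ℝ) ≤ Real.sqrt 2 := by
  have h := Real.sqrt_le_sqrt (show (1:ℝ) ≤ 2 by norm_num)
  simpa using h

lemma jb_add_le (x y : ℝ) : jb (x + y) ≤ Real.sqrt 2 * (jb x * jb y) := by
  have h1 : jb x * jb y = Real.sqrt ((1 + x ^ 2) * (1 + y ^ 2)) :=
    (Real.sqrt_mul (by positivity) _).symm
  have h2 : Real.sqrt 2 * Real.sqrt ((1 + x ^ 2) * (1 + y ^ 2))
      = Real.sqrt (2 * ((1 + x ^ 2) * (1 + y ^ 2))) :=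
    (Real.sqrt_mul (by norm_num) _).symm
  rw [jb, h1, h2]
  exact Real.sqrt_le_sqrt (by nlinarith [sq_nonneg (x*y - 1), sq_nonneg (x - y)])

lemma jb_two_mul (x : ℝ) : jb (2 * x) ≤ 2 * jb x := by
  have h2 : 2 * jb x = Real.sqrt (4 * (1 + x ^ 2)) := by
    rw [jb, show (2:ℝ) = Real.sqrt 4 by rw [show (4:ℝ) = 2^2 by norm_num, Real.sqrt_sq]; norm_num]
    exact (Real.sqrt_mul (by norm_num) _).symm
  rw [jb, h2]
  exact Real.sqrt_le_sqrt (by nlinarith)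

lemma znorm_nonneg {d : ℕ} (j : Zd d) : 0 ≤ znorm j := Real.sqrt_nonneg _

/-- embedding into Euclidean space -/
def zemb {d : ℕ} (j : Zd d) : EuclideanSpace ℝ (Fin d) := WithLp.toLp 2 (fun i => (j i : ℝ))

lemma znorm_eq {d : ℕ} (j : Zd d) : znorm j = ‖zemb j‖ := by
  rw [EuclideanSpace.norm_eq, znorm]
  congr 1
  refine Finset.sum_congr rfl fun i _ => ?_
  rw [Real.norm_eq_abs, sq_abs]; rfl

lemma zemb_add {d : ℕ} (a b : Zd d) : zemb (a + b) = zemb a + zemb b := by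
  ext i; simp [zemb]

lemma znorm_triangle {d : ℕ} (a b : Zd d) : znorm (a + b) ≤ znorm a + znorm b := by
  rw [znorm_eq, znorm_eq, znorm_eq, zemb_add]; exact norm_add_le _ _

lemma znorm_sub_rev {d : ℕ} (a b : Zd d) : znorm (a - b) = znorm (b - a) := by
  unfold znorm
  congr 1
  refine Finset.sum_congr rfl fun i _ => ?_
  have : ((a - b) i : ℝ) = -(((b - a) i : ℝ)) := by
    simp only [Pi.sub_apply]; push_cast; ring
  rw [this]; ring

lemma znorm_le_add_sub {d : ℕ} (j k : Zd d) : znorm j ≤ znorm k + znorm (j - k) := by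
  have := znorm_triangle k (j - k)
  simpa using this

end AuxReal
section AuxPeel

lemma rpow_peel {J K D : ℝ} (hJ : 0 < J) (hK : 0 < K) (hD : 1 ≤ D)
    (h1 : J ≤ Real.sqrt 2 * (K * D)) (h2 : K ≤ Real.sqrt 2 * (J * D)) (a : ℝ) :
    J ^ a ≤ Real.sqrt 2 ^ |a| * (K ^ a * D ^ |a|) := by
  have hD0 : (0:ℝ) < D := lt_of_lt_of_le one_pos hD
  rcases le_or_gt 0 a with ha | ha
  · rw [abs_of_nonneg ha]
    calc J ^ a ≤ (Real.sqrt 2 * (K * D)) ^ a := Real.rpow_le_rpow hJ.le h1 ha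
    _ = Real.sqrt 2 ^ a * (K ^ a * D ^ a) := by
        rw [Real.mul_rpow sqrt2_pos.le (by positivity), Real.mul_rpow hK.le hD0.le]
  · rw [abs_of_neg ha]
    have h3 : (Real.sqrt 2 * (J * D)) ^ a ≤ K ^ a :=
      Real.rpow_le_rpow_of_nonpos (by positivity) h2 ha.le
    rw [Real.mul_rpow sqrt2_pos.le (by positivity), Real.mul_rpow hJ.le hD0.le] at h3
    have s2 : Real.sqrt 2 ^ a * Real.sqrt 2 ^ (-a) = 1 := by
      rw [← Real.rpow_add sqrt2_pos]; simp
    have sD : D ^ a * D ^ (-a) = 1 := by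
      rw [← Real.rpow_add hD0]; simp
    have e1 : J ^ a = (Real.sqrt 2 ^ a * (J ^ a * D ^ a)) * (Real.sqrt 2 ^ (-a) * D ^ (-a)) := by
      have : (Real.sqrt 2 ^ a * (J ^ a * D ^ a)) * (Real.sqrt 2 ^ (-a) * D ^ (-a))
          = J ^ a * ((Real.sqrt 2 ^ a * Real.sqrt 2 ^ (-a)) * (D ^ a * D ^ (-a))) := by ring
      rw [this, s2, sD]; ring
    rw [e1]
    calc (Real.sqrt 2 ^ a * (J ^ a * D ^ a)) * (Real.sqrt 2 ^ (-a) * D ^ (-a))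
        ≤ K ^ a * (Real.sqrt 2 ^ (-a) * D ^ (-a)) := by
          apply mul_le_mul_of_nonneg_right h3 (by positivity)
    _ = Real.sqrt 2 ^ (-a) * (K ^ a * D ^ (-a)) := by ring

lemma peel {J K M D : ℝ} (hJ : 1 ≤ J) (hK : 1 ≤ K) (hD : 1 ≤ D) (hM : 1 ≤ M)
    (h1 : J ≤ Real.sqrt 2 * (K * D)) (h2 : K ≤ Real.sqrt 2 * (J * D))
    (h3 : J ≤ M) (h4 : M ≤ 2 * Real.sqrt 2 * (J * D)) (s ω : ℝ) :
    J ^ s * M ^ ω ≤ (2 * Real.sqrt 2) ^ (|s + ω| + max ω 0)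
      * (K ^ (s + ω) * D ^ (|s + ω| + max ω 0)) := by
  have hJ0 : (0:ℝ) < J := lt_of_lt_of_le one_pos hJ
  have hK0 : (0:ℝ) < K := lt_of_lt_of_le one_pos hK
  have hD0 : (0:ℝ) < D := lt_of_lt_of_le one_pos hD
  have hM0 : (0:ℝ) < M := lt_of_lt_of_le one_pos hM
  have hc1 : (1:ℝ) ≤ 2 * Real.sqrt 2 := by nlinarith [one_le_sqrt2]
  have hc0 : (0:ℝ) < 2 * Real.sqrt 2 := lt_of_lt_of_le one_pos hc1
  have hs2c : ∀ x : ℝ, 0 ≤ x → Real.sqrt 2 ^ x ≤ (2 * Real.sqrt 2) ^ x := by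
    intro x hx
    exact Real.rpow_le_rpow sqrt2_pos.le (by nlinarith [one_le_sqrt2]) hx
  have hpeelJ := rpow_peel hJ0 hK0 hD (h1) (h2) (s + ω)
  rcases le_or_gt 0 ω with hw | hw
  · rw [max_eq_left hw]
    have hMw : M ^ ω ≤ (2 * Real.sqrt 2) ^ ω * (J ^ ω * D ^ ω) := by
      calc M ^ ω ≤ (2 * Real.sqrt 2 * (J * D)) ^ ω := Real.rpow_le_rpow hM0.le h4 hw
      _ = _ := by rw [Real.mul_rpow hc0.le (by positivity), Real.mul_rpow hJ0.le hD0.le]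
    have step1 : J ^ s * M ^ ω ≤ (2 * Real.sqrt 2) ^ ω * (J ^ (s + ω) * D ^ ω) := by
      have : J ^ s * M ^ ω ≤ J ^ s * ((2 * Real.sqrt 2) ^ ω * (J ^ ω * D ^ ω)) :=
        mul_le_mul_of_nonneg_left hMw (by positivity)
      calc J ^ s * M ^ ω ≤ J ^ s * ((2 * Real.sqrt 2) ^ ω * (J ^ ω * D ^ ω)) := this
      _ = (2 * Real.sqrt 2) ^ ω * ((J ^ s * J ^ ω) * D ^ ω) := by ring
      _ = (2 * Real.sqrt 2) ^ ω * (J ^ (s + ω) * D ^ ω) := by rw [← Real.rpow_add hJ0]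
    have step2 : J ^ (s + ω) ≤ (2 * Real.sqrt 2) ^ |s + ω| * (K ^ (s + ω) * D ^ |s + ω|) := by
      calc J ^ (s + ω) ≤ Real.sqrt 2 ^ |s + ω| * (K ^ (s + ω) * D ^ |s + ω|) := hpeelJ
      _ ≤ (2 * Real.sqrt 2) ^ |s + ω| * (K ^ (s + ω) * D ^ |s + ω|) := by
          apply mul_le_mul_of_nonneg_right (hs2c _ (abs_nonneg _)) (by positivity)
    calc J ^ s * M ^ ω ≤ (2 * Real.sqrt 2) ^ ω * (J ^ (s + ω) * D ^ ω) := step1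
    _ ≤ (2 * Real.sqrt 2) ^ ω
        * (((2 * Real.sqrt 2) ^ |s + ω| * (K ^ (s + ω) * D ^ |s + ω|)) * D ^ ω) := by
        apply mul_le_mul_of_nonneg_left (mul_le_mul_of_nonneg_right step2 (by positivity))
          (by positivity)
    _ = ((2 * Real.sqrt 2) ^ ω * (2 * Real.sqrt 2) ^ |s + ω|)
        * (K ^ (s + ω) * (D ^ |s + ω| * D ^ ω)) := by ring
    _ = (2 * Real.sqrt 2) ^ (|s + ω| + ω) * (K ^ (s + ω) * D ^ (|s + ω| + ω)) := by
        rw [← Real.rpow_add hc0, ← Real.rpow_add hD0, add_comm ω (|s + ω|)]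
  · rw [max_eq_right hw.le, add_zero]
    have hMw : M ^ ω ≤ J ^ ω := Real.rpow_le_rpow_of_nonpos hJ0 h3 hw.le
    calc J ^ s * M ^ ω ≤ J ^ s * J ^ ω := mul_le_mul_of_nonneg_left hMw (by positivity)
    _ = J ^ (s + ω) := by rw [← Real.rpow_add hJ0]
    _ ≤ Real.sqrt 2 ^ |s + ω| * (K ^ (s + ω) * D ^ |s + ω|) := hpeelJ
    _ ≤ (2 * Real.sqrt 2) ^ |s + ω| * (K ^ (s + ω) * D ^ |s + ω|) := by
        apply mul_le_mul_of_nonneg_right (hs2c _ (abs_nonneg _)) (by positivity)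

lemma peel_jb {d : ℕ} (s ω : ℝ) (j k : Zd d) :
    jb (znorm j) ^ s * jb (znorm j + znorm k) ^ ω
      ≤ (2 * Real.sqrt 2) ^ (|s + ω| + max ω 0)
        * (jb (znorm k) ^ (s + ω) * jb (znorm (j - k)) ^ (|s + ω| + max ω 0)) := by
  apply peel (one_le_jb _) (one_le_jb _) (one_le_jb _) (one_le_jb _)
  · calc jb (znorm j) ≤ jb (znorm k + znorm (j - k)) :=
        jb_le_jb (znorm_le_add_sub j k) (znorm_nonneg _)
    _ ≤ Real.sqrt 2 * (jb (znorm k) * jb (znorm (j - k))) := jb_add_le _ _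
  · calc jb (znorm k) ≤ jb (znorm j + znorm (k - j)) :=
        jb_le_jb (znorm_le_add_sub k j) (znorm_nonneg _)
    _ = jb (znorm j + znorm (j - k)) := by rw [znorm_sub_rev k j]
    _ ≤ Real.sqrt 2 * (jb (znorm j) * jb (znorm (j - k))) := jb_add_le _ _
  · exact jb_le_jb (le_add_of_nonneg_right (znorm_nonneg _)) (znorm_nonneg _)
  · have h := znorm_le_add_sub k j
    rw [znorm_sub_rev k j] at h
    calc jb (znorm j + znorm k) ≤ jb (2 * znorm j + znorm (j - k)) :=
        jb_le_jb (by linarith) (add_nonneg (znorm_nonneg _) (znorm_nonneg _))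
    _ ≤ Real.sqrt 2 * (jb (2 * znorm j) * jb (znorm (j - k))) := jb_add_le _ _
    _ ≤ Real.sqrt 2 * ((2 * jb (znorm j)) * jb (znorm (j - k))) := by
        apply mul_le_mul_of_nonneg_left
          (mul_le_mul_of_nonneg_right (jb_two_mul _) (jb_nonneg _)) sqrt2_pos.le
    _ = 2 * Real.sqrt 2 * (jb (znorm j) * jb (znorm (j - k))) := by ring

lemma split_jb {a b x y : ℝ} (hx : 0 ≤ x) (hy : 0 ≤ y) (ha : 0 ≤ a) (hb : 0 ≤ b) :
    jb (x + y) ^ (-(a + b)) ≤ jb x ^ (-a) * jb y ^ (-b) := by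
  rw [neg_add, Real.rpow_add (jb_pos _)]
  have h1 : jb (x + y) ^ (-a) ≤ jb x ^ (-a) :=
    Real.rpow_le_rpow_of_nonpos (jb_pos _) (jb_le_jb (by linarith) hx) (neg_nonpos.2 ha)
  have h2 : jb (x + y) ^ (-b) ≤ jb y ^ (-b) :=
    Real.rpow_le_rpow_of_nonpos (jb_pos _) (jb_le_jb (by linarith) hy) (neg_nonpos.2 hb)
  exact mul_le_mul h1 h2 (Real.rpow_nonneg (jb_nonneg _) _) (Real.rpow_nonneg (jb_nonneg _) _)

lemma collapse {D : ℝ} (hD : 0 < D) (A u : ℝ) : D ^ A * D ^ (-(A + u)) = D ^ (-u) := by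
  rw [← Real.rpow_add hD]; ring_nf

end AuxPeel
section AuxENNReal

open MeasureTheory ENNReal

variable {ι : Type*} [Countable ι] [MeasurableSpace ι] [MeasurableSingletonClass ι]

lemma tsum_mul_le_Lp_Lq (F G : ι → ℝ≥0∞) {a b : ℝ} (hab : a.HolderConjugate b) :
    ∑' i, F i * G i ≤ (∑' i, F i ^ a) ^ (1 / a) * (∑' i, G i ^ b) ^ (1 / b) := by
  have h := ENNReal.lintegral_mul_le_Lp_mul_Lq Measure.count hab
    (measurable_of_countable F).aemeasurable (measurable_of_countable G).aemeasurable
  simpa [MeasureTheory.lintegral_count, Pi.mul_apply] using h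

lemma nestNorm_mono (p : ℝ≥0∞) {F G : ι → ℝ≥0∞} (h : ∀ i, F i ≤ G i) :
    nestNorm p F ≤ nestNorm p G := by
  unfold nestNorm
  split_ifs
  · exact iSup_mono h
  · exact ENNReal.rpow_le_rpow
      (ENNReal.tsum_le_tsum fun i => ENNReal.rpow_le_rpow (h i) ENNReal.toReal_nonneg)
      (by positivity)

lemma toReal_inv_arith {p q r : ℝ≥0∞} (hp : 1 ≤ p) (hq : 1 ≤ q)
    (hpqr : p⁻¹ + q⁻¹ = r⁻¹) (hpt : p ≠ ∞) (hqt : q ≠ ∞) :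
    p.toReal⁻¹ + q.toReal⁻¹ = r.toReal⁻¹ := by
  have h1 : (p⁻¹ + q⁻¹).toReal = p⁻¹.toReal + q⁻¹.toReal :=
    ENNReal.toReal_add (by simp [ENNReal.inv_ne_top]; exact fun h => by simp [h] at hp) ?_
  · rw [hpqr] at h1
    rw [← ENNReal.toReal_inv, ← ENNReal.toReal_inv, ← ENNReal.toReal_inv, h1]
  · simp [ENNReal.inv_ne_top]; exact fun h => by simp [h] at hq

lemma pull_const {t : ℝ} (ht : 0 < t) (c : ℝ≥0∞) (G : ι → ℝ≥0∞) :
    (∑' i, (c * G i) ^ t) ^ (1 / t) = c * (∑' i, G i ^ t) ^ (1 / t) := by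
  have e : ∀ i, (c * G i) ^ t = c ^ t * G i ^ t :=
    fun i => ENNReal.mul_rpow_of_nonneg _ _ ht.le
  rw [tsum_congr e, ENNReal.tsum_mul_left, ENNReal.mul_rpow_of_nonneg _ _ (by positivity),
    ← ENNReal.rpow_mul, mul_one_div, div_self ht.ne', ENNReal.rpow_one]

lemma nestNorm_holder {p q r : ℝ≥0∞} (hp : 1 ≤ p) (hq : 1 ≤ q)
    (hpqr : p⁻¹ + q⁻¹ = r⁻¹) (F G : ι → ℝ≥0∞) :
    nestNorm r (fun i => F i * G i) ≤ nestNorm p F * nestNorm q G := by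
  have hp0 : p ≠ 0 := fun h => by simp [h] at hp
  have hq0 : q ≠ 0 := fun h => by simp [h] at hq
  by_cases hpt : p = ∞
  · by_cases hqt : q = ∞
    · have hrt : r = ∞ := by
        subst hpt hqt
        simp at hpqr
        simpa using congrArg Inv.inv hpqr.symm
      subst hpt hqt hrt
      simp only [nestNorm, if_pos rfl]
      exact iSup_le fun i => mul_le_mul' (le_iSup F i) (le_iSup G i)
    · -- p = ∞, r = q
      have hrq : q = r := by
        subst hpt
        simp only [ENNReal.inv_top, zero_add] at hpqr
        simpa using congrArg Inv.inv hpqr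
      subst hpt
      subst hrq
      have ht : (0:ℝ) < q.toReal := ENNReal.toReal_pos hq0 hqt
      simp only [nestNorm, if_pos rfl, if_neg hqt]
      calc (∑' i, (F i * G i) ^ q.toReal) ^ (1 / q.toReal)
          ≤ (∑' i, ((⨆ i', F i') * G i) ^ q.toReal) ^ (1 / q.toReal) := by
            apply ENNReal.rpow_le_rpow _ (by positivity)
            exact ENNReal.tsum_le_tsum fun i => ENNReal.rpow_le_rpow
              (mul_le_mul' (le_iSup F i) le_rfl) ht.le
      _ = (⨆ i', F i') * (∑' i, G i ^ q.toReal) ^ (1 / q.toReal) := pull_const ht _ G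
  · by_cases hqt : q = ∞
    · have hrp : p = r := by
        subst hqt
        simp only [ENNReal.inv_top, add_zero] at hpqr
        simpa using congrArg Inv.inv hpqr
      subst hqt
      subst hrp
      have ht : (0:ℝ) < p.toReal := ENNReal.toReal_pos hp0 hpt
      simp only [nestNorm, if_pos rfl, if_neg hpt]
      calc (∑' i, (F i * G i) ^ p.toReal) ^ (1 / p.toReal)
          ≤ (∑' i, (F i * ⨆ i', G i') ^ p.toReal) ^ (1 / p.toReal) := by
            apply ENNReal.rpow_le_rpow _ (by positivity)
            exact ENNReal.tsum_le_tsum fun i => ENNReal.rpow_le_rpow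
              (mul_le_mul' le_rfl (le_iSup G i)) ht.le
      _ = (∑' i, F i ^ p.toReal) ^ (1 / p.toReal) * (⨆ i', G i') := by
            rw [tsum_congr (fun i => by rw [mul_comm (F i) _]), pull_const ht _ F, mul_comm]
    · -- both finite
      have hr0 : r⁻¹ ≠ 0 := by
        rw [← hpqr]
        intro h
        rw [add_eq_zero] at h
        exact (ENNReal.inv_ne_zero.2 hpt) h.1
      have hrt : r ≠ ∞ := by simpa [ENNReal.inv_eq_zero] using hr0
      have hr0' : r ≠ 0 := by
        intro h
        subst h
        simp only [ENNReal.inv_zero] at hpqr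
        have h1 : p⁻¹ ≤ 1 := ENNReal.inv_le_one.2 hp
        have h2 : q⁻¹ ≤ 1 := ENNReal.inv_le_one.2 hq
        have hle : p⁻¹ + q⁻¹ ≤ 2 := by
          calc p⁻¹ + q⁻¹ ≤ 1 + 1 := add_le_add h1 h2
          _ = 2 := by norm_num
        rw [hpqr] at hle
        exact absurd hle (by simp)
      have tp_pos : (0:ℝ) < p.toReal := ENNReal.toReal_pos hp0 hpt
      have tq_pos : (0:ℝ) < q.toReal := ENNReal.toReal_pos hq0 hqt
      have tr_pos : (0:ℝ) < r.toReal := ENNReal.toReal_pos hr0' hrt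
      have harith : p.toReal⁻¹ + q.toReal⁻¹ = r.toReal⁻¹ := toReal_inv_arith hp hq hpqr hpt hqt
      simp only [nestNorm, if_neg hpt, if_neg hqt, if_neg hrt]
      set tp := p.toReal
      set tq := q.toReal
      set tr := r.toReal
      have htrp : tr < tp := by
        rw [← inv_lt_inv₀ tp_pos tr_pos]  -- tp⁻¹ < tr⁻¹
        rw [← harith]
        nlinarith [tq_pos, inv_pos.2 tq_pos]
      have htrq : tr < tq := by
        rw [← inv_lt_inv₀ tq_pos tr_pos]
        rw [← harith]
        nlinarith [tp_pos, inv_pos.2 tp_pos]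
      have hconj : (tp / tr).HolderConjugate (tq / tr) := by
        rw [Real.holderConjugate_iff]; constructor
        · rw [lt_div_iff₀ tr_pos]; linarith
        · have h := harith
          rw [inv_div, inv_div, div_add_div _ _ (ne_of_gt tp_pos) (ne_of_gt tq_pos),
            div_eq_one_iff_eq (by positivity)]
          field_simp at h
          nlinarith [h]
      have key := tsum_mul_le_Lp_Lq (fun i => F i ^ tr) (fun i => G i ^ tr) hconj
      have e1 : ∀ i : ι, (F i * G i) ^ tr = F i ^ tr * G i ^ tr :=
        fun i => ENNReal.mul_rpow_of_nonneg _ _ tr_pos.le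
      have e2 : ∀ i : ι, (F i ^ tr) ^ (tp / tr) = F i ^ tp := by
        intro i
        rw [← ENNReal.rpow_mul]
        congr 1
        field_simp
      have e3 : ∀ i : ι, (G i ^ tr) ^ (tq / tr) = G i ^ tq := by
        intro i
        rw [← ENNReal.rpow_mul]
        congr 1
        field_simp
      simp only [e1, e2, e3] at key
      calc (∑' i, (F i * G i) ^ tr) ^ (1 / tr)
          = (∑' i, F i ^ tr * G i ^ tr) ^ (1 / tr) := by rw [tsum_congr e1]
      _
          ≤ ((∑' i, F i ^ tp) ^ (1 / (tp / tr)) * (∑' i, G i ^ tq) ^ (1 / (tq / tr))) ^ (1 / tr) :=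
            ENNReal.rpow_le_rpow key (by positivity)
      _ = (∑' i, F i ^ tp) ^ (1 / tp) * (∑' i, G i ^ tq) ^ (1 / tq) := by
          rw [ENNReal.mul_rpow_of_nonneg _ _ (by positivity), ← ENNReal.rpow_mul,
            ← ENNReal.rpow_mul]
          congr 2
          · rw [one_div_div]
            field_simp
          · rw [one_div_div]
            field_simp

end AuxENNReal
section AuxYoung

open ENNReal

variable {γ : Type*} [AddCommGroup γ] [Countable γ] [MeasurableSpace γ]
  [MeasurableSingletonClass γ]

lemma nestNorm_conv_le {p : ℝ≥0∞} (hp : 1 ≤ p) (A F : γ → ℝ≥0∞) :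
    nestNorm p (fun j => ∑' k, A (j - k) * F k) ≤ (∑' m, A m) * nestNorm p F := by
  have trans1 : ∀ j : γ, ∑' k, A (j - k) = ∑' m, A m := fun j => (Equiv.subLeft j).tsum_eq A
  have trans2 : ∀ k : γ, ∑' j, A (j - k) = ∑' m, A m := fun k => (Equiv.subRight k).tsum_eq A
  by_cases hpt : p = ∞
  · subst hpt
    simp only [nestNorm, if_pos rfl]
    apply iSup_le
    intro j
    calc ∑' k, A (j - k) * F k ≤ ∑' k, A (j - k) * ⨆ i, F i :=
        ENNReal.tsum_le_tsum fun k => mul_le_mul' le_rfl (le_iSup F k)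
    _ = (∑' k, A (j - k)) * ⨆ i, F i := ENNReal.tsum_mul_right
    _ = (∑' m, A m) * ⨆ i, F i := by rw [trans1 j]
  · have hp0 : p ≠ 0 := fun h => by simp [h] at hp
    have ht : (0:ℝ) < p.toReal := ENNReal.toReal_pos hp0 hpt
    have ht1 : (1:ℝ) ≤ p.toReal := by
      have := ENNReal.toReal_mono hpt hp
      simpa using this
    simp only [nestNorm, if_neg hpt]
    set t := p.toReal with hts
    have swap_comp : ∑' (j : γ), ∑' k, A (j - k) * F k ^ t
        = (∑' m, A m) * ∑' k, F k ^ t := by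
      rw [ENNReal.tsum_comm]
      calc ∑' k, ∑' j, A (j - k) * F k ^ t
          = ∑' (k : γ), (∑' j, A (j - k)) * F k ^ t := by
            exact tsum_congr fun k => ENNReal.tsum_mul_right
      _ = ∑' (k : γ), (∑' m, A m) * F k ^ t := by
            exact tsum_congr fun k => by rw [trans2 k]
      _ = (∑' m, A m) * ∑' k, F k ^ t := ENNReal.tsum_mul_left
    rcases eq_or_lt_of_le ht1 with h1 | h1
    · -- t = 1
      rw [← h1]
      simp only [ENNReal.rpow_one, one_div_one]
      refine le_of_eq ?_
      calc ∑' (j : γ), ∑' k, A (j - k) * F k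
          = ∑' (j : γ), ∑' k, A (j - k) * F k ^ (1:ℝ) := by simp [ENNReal.rpow_one]
      _ = (∑' m, A m) * ∑' k, F k ^ (1:ℝ) := by rw [← h1] at swap_comp; exact swap_comp
      _ = (∑' m, A m) * ∑' k, F k := by simp [ENNReal.rpow_one]
    · -- 1 < t
      set t' := t / (t - 1) with ht's
      have htm1 : (0:ℝ) < t - 1 := by linarith
      have ht'pos : (0:ℝ) < t' := by positivity
      have hconj : t'.HolderConjugate t := by
        rw [Real.holderConjugate_iff]; constructor
        · rw [ht's, lt_div_iff₀ htm1]; linarith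
        · rw [ht's, inv_div]
          field_simp
          ring
      have hsum_inv : 1 / t' + 1 / t = 1 := by
        rw [ht's, one_div_div]
        field_simp
        ring
      have pointwise : ∀ j : γ, (∑' k, A (j - k) * F k)
          ≤ (∑' m, A m) ^ (1 / t') * (∑' k, A (j - k) * F k ^ t) ^ (1 / t) := by
        intro j
        have e : ∀ k : γ, A (j - k) * F k
            = (A (j - k) ^ (1 / t')) * (A (j - k) ^ (1 / t) * F k) := by
          intro k
          rw [← mul_assoc, ← ENNReal.rpow_add_of_nonneg _ _ (by positivity) (by positivity),
            hsum_inv, ENNReal.rpow_one]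
        rw [tsum_congr e]
        have h := tsum_mul_le_Lp_Lq (fun k => A (j - k) ^ (1 / t'))
          (fun k => A (j - k) ^ (1 / t) * F k) hconj
        have e2 : ∀ k : γ, (A (j - k) ^ (1 / t')) ^ t' = A (j - k) := by
          intro k
          rw [← ENNReal.rpow_mul, one_div_mul_cancel (ne_of_gt ht'pos), ENNReal.rpow_one]
        have e3 : ∀ k : γ, (A (j - k) ^ (1 / t) * F k) ^ t = A (j - k) * F k ^ t := by
          intro k
          rw [ENNReal.mul_rpow_of_nonneg _ _ ht.le, ← ENNReal.rpow_mul,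
            one_div_mul_cancel (ne_of_gt ht), ENNReal.rpow_one]
        simp only [e2, e3] at h
        calc ∑' k, (A (j - k) ^ (1 / t')) * (A (j - k) ^ (1 / t) * F k)
            ≤ (∑' k, A (j - k)) ^ (1 / t') * (∑' k, A (j - k) * F k ^ t) ^ (1 / t) := h
        _ = (∑' m, A m) ^ (1 / t') * (∑' k, A (j - k) * F k ^ t) ^ (1 / t) := by rw [trans1 j]
      set SA := ∑' m, A m with hSA
      calc (∑' j, (∑' k, A (j - k) * F k) ^ t) ^ (1 / t)
          ≤ (∑' j, (SA ^ (1 / t') * (∑' k, A (j - k) * F k ^ t) ^ (1 / t)) ^ t) ^ (1 / t) := by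
            apply ENNReal.rpow_le_rpow _ (by positivity)
            exact ENNReal.tsum_le_tsum fun j => ENNReal.rpow_le_rpow (pointwise j) ht.le
      _ = (∑' j, SA ^ (t / t') * (∑' k, A (j - k) * F k ^ t)) ^ (1 / t) := by
            congr 1
            refine tsum_congr fun j => ?_
            rw [ENNReal.mul_rpow_of_nonneg _ _ ht.le, ← ENNReal.rpow_mul, ← ENNReal.rpow_mul,
              one_div_mul_cancel (ne_of_gt ht), ENNReal.rpow_one]
            congr 2
            field_simp
      _ = (SA ^ (t / t') * (SA * ∑' k, F k ^ t)) ^ (1 / t) := by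
            rw [ENNReal.tsum_mul_left, swap_comp]
      _ = SA * (∑' k, F k ^ t) ^ (1 / t) := by
            have hred : SA ^ (t / t') * (SA * ∑' k, F k ^ t)
                = SA ^ (t / t' + 1) * ∑' k, F k ^ t := by
              rw [ENNReal.rpow_add_of_nonneg _ _ (by positivity) zero_le_one,
                ENNReal.rpow_one]
              ring
            rw [hred, ENNReal.mul_rpow_of_nonneg _ _ (by positivity), ← ENNReal.rpow_mul]
            congr 1
            rw [show (t / t' + 1) * (1 / t) = 1 / t' + 1 / t by field_simp, hsum_inv,
              ENNReal.rpow_one]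

end AuxYoung
section AuxSummable

open ENNReal

lemma tsum_pi_prod (d : ℕ) (φ : ℤ → ℝ≥0∞) :
    ∑' m : Fin d → ℤ, ∏ i, φ (m i) = (∑' n : ℤ, φ n) ^ d := by
  induction d with
  | zero =>
    rw [tsum_eq_single (fun i => 0) (fun b hb => absurd (Subsingleton.elim b _) hb)]
    simp
  | succ n ih =>
    rw [← (Fin.consEquiv fun _ : Fin (n + 1) => ℤ).tsum_eq, ENNReal.tsum_prod']
    have e : ∀ (a : ℤ) (v : Fin n → ℤ),
        ∏ i, φ (((Fin.consEquiv fun _ : Fin (n + 1) => ℤ) (a, v)) i) = φ a * ∏ i, φ (v i) := by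
      intro a v
      rw [Fin.prod_univ_succ]
      simp [Fin.consEquiv]
    calc ∑' (a : ℤ) (v : Fin n → ℤ), ∏ i, φ (((Fin.consEquiv fun _ : Fin (n + 1) => ℤ) (a, v)) i)
        = ∑' (a : ℤ) (v : Fin n → ℤ), φ a * ∏ i, φ (v i) := by
          exact tsum_congr fun a => tsum_congr fun v => e a v
    _ = ∑' (a : ℤ), φ a * ∑' (v : Fin n → ℤ), ∏ i, φ (v i) := by
          exact tsum_congr fun a => ENNReal.tsum_mul_left
    _ = (∑' (a : ℤ), φ a) * ∑' (v : Fin n → ℤ), ∏ i, φ (v i) := ENNReal.tsum_mul_right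
    _ = (∑' n : ℤ, φ n) ^ (n + 1) := by rw [ih, pow_succ]; ring

lemma jb_ge_half (x : ℝ) (hx : 0 ≤ x) : (1 + x) / Real.sqrt 2 ≤ jb x := by
  have h0 : 0 ≤ (1 + x) / Real.sqrt 2 := by positivity
  rw [← Real.sqrt_sq h0, jb]
  apply Real.sqrt_le_sqrt
  rw [div_pow, Real.sq_sqrt (by norm_num : (0:ℝ) ≤ 2)]
  rw [div_le_iff₀ (by norm_num : (0:ℝ) < 2)]
  nlinarith [sq_nonneg (x - 1)]

lemma summable_jb_nat {v : ℝ} (hv : 1 < v) : Summable (fun n : ℕ => jb (n : ℝ) ^ (-v)) := by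
  have hmaj : Summable (fun n : ℕ => Real.sqrt 2 ^ v * ((n : ℝ) + 1) ^ (-v)) := by
    apply Summable.mul_left
    have h := (summable_nat_add_iff 1).mpr (Real.summable_nat_rpow.mpr (by linarith : -v < -1))
    refine h.congr fun n => ?_
    push_cast
    ring_nf
  apply Summable.of_nonneg_of_le (fun n => Real.rpow_nonneg (jb_nonneg _) _) _ hmaj
  intro n
  have h1 : ((n : ℝ) + 1) / Real.sqrt 2 ≤ jb n := by
    rw [add_comm]
    exact jb_ge_half (n : ℝ) (by positivity)
  have h2 : jb (n:ℝ) ^ (-v) ≤ (((n : ℝ) + 1) / Real.sqrt 2) ^ (-v) :=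
    Real.rpow_le_rpow_of_nonpos (by positivity) h1 (by linarith)
  calc jb (n:ℝ) ^ (-v) ≤ (((n : ℝ) + 1) / Real.sqrt 2) ^ (-v) := h2
  _ = ((n : ℝ) + 1) ^ (-v) / Real.sqrt 2 ^ (-v) :=
      Real.div_rpow (by positivity : (0:ℝ) ≤ (n:ℝ) + 1) sqrt2_pos.le (-v)
  _ = Real.sqrt 2 ^ v * ((n : ℝ) + 1) ^ (-v) := by
      rw [Real.rpow_neg sqrt2_pos.le, div_eq_mul_inv, inv_inv]
      ring

lemma summable_jb_int {v : ℝ} (hv : 1 < v) :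
    Summable (fun n : ℤ => jb |(n : ℝ)| ^ (-v)) := by
  apply Summable.of_nat_of_neg
  · refine (summable_jb_nat hv).congr fun n => ?_
    simp [abs_of_nonneg]
  · refine (summable_jb_nat hv).congr fun n => ?_
    push_cast
    simp [abs_of_nonpos]

lemma abs_le_znorm {d : ℕ} (m : Zd d) (i : Fin d) : |(m i : ℝ)| ≤ znorm m := by
  rw [← Real.sqrt_sq_eq_abs, znorm]
  exact Real.sqrt_le_sqrt (Finset.single_le_sum (f := fun i => ((m i : ℝ))^2)
    (fun i _ => sq_nonneg _) (Finset.mem_univ i))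

lemma sum_jb_ne_top {d : ℕ} (hd : 1 ≤ d) {u : ℝ} (hu : (d : ℝ) < u) :
    (∑' m : Zd d, ENNReal.ofReal (jb (znorm m) ^ (-u))) ≠ ∞ := by
  have hd0 : (0:ℝ) < d := by exact_mod_cast hd
  set v := u / d with hvs
  have hv : 1 < v := by rw [hvs, lt_div_iff₀ hd0]; linarith
  have hptwise : ∀ m : Zd d,
      ENNReal.ofReal (jb (znorm m) ^ (-u)) ≤ ∏ i, ENNReal.ofReal (jb |(m i : ℝ)| ^ (-v)) := by
    intro m
    have hreal : jb (znorm m) ^ (-u) ≤ ∏ i : Fin d, jb |(m i : ℝ)| ^ (-v) := by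
      have hsplit : jb (znorm m) ^ (-u) = ∏ _i : Fin d, jb (znorm m) ^ (-v) := by
        rw [Finset.prod_const, Finset.card_univ, Fintype.card_fin, ← Real.rpow_natCast _ d,
          ← Real.rpow_mul (jb_nonneg _)]
        congr 1
        rw [hvs]
        field_simp
      rw [hsplit]
      apply Finset.prod_le_prod (fun i _ => Real.rpow_nonneg (jb_nonneg _) _)
      intro i _
      exact Real.rpow_le_rpow_of_nonpos (jb_pos _)
        (jb_le_jb (abs_le_znorm m i) (abs_nonneg _)) (by linarith)
    calc ENNReal.ofReal (jb (znorm m) ^ (-u))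
        ≤ ENNReal.ofReal (∏ i : Fin d, jb |(m i : ℝ)| ^ (-v)) := ENNReal.ofReal_le_ofReal hreal
    _ = ∏ i, ENNReal.ofReal (jb |(m i : ℝ)| ^ (-v)) := by
        rw [ENNReal.ofReal_prod_of_nonneg (fun i _ => Real.rpow_nonneg (jb_nonneg _) _)]
  have hone : (∑' n : ℤ, ENNReal.ofReal (jb |(n : ℝ)| ^ (-v))) ≠ ∞ := by
    rw [← ENNReal.ofReal_tsum_of_nonneg (fun n => Real.rpow_nonneg (jb_nonneg _) _)
      (summable_jb_int hv)]
    exact ENNReal.ofReal_ne_top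
  have heq := tsum_pi_prod d (fun n : ℤ => ENNReal.ofReal (jb |(n : ℝ)| ^ (-v)))
  exact ne_top_of_le_ne_top (ENNReal.pow_ne_top hone)
    (le_trans (ENNReal.tsum_le_tsum hptwise) (le_of_eq heq))

end AuxSummable
section AuxFinal

open ENNReal

lemma nestNorm_const_mul_le {ι : Type*} [Countable ι] [Nonempty ι] [MeasurableSpace ι]
    [MeasurableSingletonClass ι] {p : ℝ≥0∞} (hp : 1 ≤ p) (c : ℝ≥0∞) (F : ι → ℝ≥0∞) :
    nestNorm p (fun i => c * F i) ≤ c * nestNorm p F := by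
  have h := nestNorm_holder (p := ∞) (q := p) (r := p) le_top hp (by simp) (fun _ => c) F
  calc nestNorm p (fun i => c * F i) ≤ nestNorm ∞ (fun _ : ι => c) * nestNorm p F := h
  _ = c * nestNorm p F := by
      rw [show nestNorm ∞ (fun _ : ι => c) = c by simp [nestNorm]]

lemma ofReal_norm_tsum_le {ι : Type*} [Countable ι] (h : ι → ℂ) :
    ENNReal.ofReal ‖∑' i, h i‖ ≤ ∑' i, ENNReal.ofReal ‖h i‖ := by
  by_cases hs : Summable fun i => ‖h i‖
  · calc ENNReal.ofReal ‖∑' i, h i‖ ≤ ENNReal.ofReal (∑' i, ‖h i‖) :=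
        ENNReal.ofReal_le_ofReal (norm_tsum_le_tsum_norm hs)
    _ = _ := ENNReal.ofReal_tsum_of_nonneg (fun i => norm_nonneg _) hs
  · have htop : ∑' i, ENNReal.ofReal ‖h i‖ = ∞ := by
      by_contra h'
      apply hs
      have h2 : (∑' i, ((‖h i‖₊ : ℝ≥0) : ℝ≥0∞)) ≠ ∞ := by
        refine ne_of_eq_of_ne ?_ h'
        exact tsum_congr fun i => (ofReal_norm_eq_enorm (h i)).symm
      have h3 := ENNReal.tsum_coe_ne_top_iff_summable.1 h2
      have h4 := NNReal.summable_coe.2 h3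
      refine h4.congr fun i => ?_
      simp
    rw [htop]
    exact le_top

end AuxFinal
/-- if `‖Θ‖_{ω₁,ω₂,N} < ∞` for some
`N > d + (max(ω₁,0)+max(ω₂,0))/2 + (|s₁+ω₁|+|s₂+ω₂|)/2`, then
`𝒯_Θ : ℓ^p_{s₁+ω₁} × ℓ^q_{s₂+ω₂} → ℓ^r_{s₁+s₂}` is bounded. -/
theorem stmt_4 {d : ℕ} (hd : 1 ≤ d) (s₁ s₂ ω₁ ω₂ N : ℝ)
    (Θ : Zd d → Zd d → Zd d → ℂ)
    (hΘ : tensorNorm2 ω₁ ω₂ N Θ ≠ ∞)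
    (hN : N > (d : ℝ) + (max ω₁ 0 + max ω₂ 0) / 2 + (|s₁ + ω₁| + |s₂ + ω₂|) / 2)
    (p q r : ℝ≥0∞) (hp : 1 ≤ p) (hq : 1 ≤ q) (hr : 1 ≤ r)
    (hpqr : p⁻¹ + q⁻¹ = r⁻¹) :
    ∃ C : ℝ, 0 < C ∧ ∀ f g : Zd d → ℂ,
      wlpNorm r (s₁ + s₂) (Tbil Θ f g) ≤
        ENNReal.ofReal C * wlpNorm p (s₁ + ω₁) f * wlpNorm q (s₂ + ω₂) g := by
  classical
  have nn : ∀ x t : ℝ, 0 ≤ jb x ^ t := fun x t => Real.rpow_nonneg (jb_nonneg _) _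
  have jpos : ∀ x t : ℝ, 0 < jb x ^ t := fun x t => Real.rpow_pos_of_pos (jb_pos _) _
  set A₁ := |s₁ + ω₁| + max ω₁ 0 with hA₁
  set A₂ := |s₂ + ω₂| + max ω₂ 0 with hA₂
  have hA₁0 : 0 ≤ A₁ := add_nonneg (abs_nonneg _) (le_max_right _ _)
  have hA₂0 : 0 ≤ A₂ := add_nonneg (abs_nonneg _) (le_max_right _ _)
  set u := N - (A₁ + A₂) / 2 with hus
  have hu : (d : ℝ) < u := by rw [hus, hA₁, hA₂]; linarith
  have hd0 : (0:ℝ) < d := by exact_mod_cast hd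
  have hu0 : 0 < u := lt_trans hd0 hu
  have ha₁u : 0 ≤ A₁ + u := by linarith
  have ha₂u : 0 ≤ A₂ + u := by linarith
  set M₀ := (tensorNorm2 ω₁ ω₂ N Θ).toReal with hM₀s
  have hM₀ : 0 ≤ M₀ := ENNReal.toReal_nonneg
  have Θbd : ∀ j k l : Zd d, ‖Θ j k l‖ ≤ M₀ *
      (jb (znorm j + znorm k) ^ ω₁ * jb (znorm j + znorm l) ^ ω₂ *
        jb (znorm (j - k) + znorm (j - l)) ^ (-(2 * N))) := by
    intro j k l
    have hXnn : 0 ≤ ‖Θ j k l‖ * jb (znorm (j - k) + znorm (j - l)) ^ (2 * N) /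
        (jb (znorm j + znorm k) ^ ω₁ * jb (znorm j + znorm l) ^ ω₂) :=
      div_nonneg (mul_nonneg (norm_nonneg _) (nn _ _)) (mul_nonneg (nn _ _) (nn _ _))
    have hle : ENNReal.ofReal (‖Θ j k l‖ * jb (znorm (j - k) + znorm (j - l)) ^ (2 * N) /
        (jb (znorm j + znorm k) ^ ω₁ * jb (znorm j + znorm l) ^ ω₂)) ≤
        tensorNorm2 ω₁ ω₂ N Θ := by
      exact le_iSup_of_le j (le_iSup_of_le k (le_iSup_of_le l le_rfl))
    have hXle : ‖Θ j k l‖ * jb (znorm (j - k) + znorm (j - l)) ^ (2 * N) /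
        (jb (znorm j + znorm k) ^ ω₁ * jb (znorm j + znorm l) ^ ω₂) ≤ M₀ := by
      have h2 := ENNReal.toReal_mono hΘ hle
      rwa [ENNReal.toReal_ofReal hXnn] at h2
    have hPQ : 0 < jb (znorm j + znorm k) ^ ω₁ * jb (znorm j + znorm l) ^ ω₂ :=
      mul_pos (jpos _ _) (jpos _ _)
    rw [div_le_iff₀ hPQ] at hXle
    have hRid : jb (znorm (j - k) + znorm (j - l)) ^ (2 * N) *
        jb (znorm (j - k) + znorm (j - l)) ^ (-(2 * N)) = 1 := by
      rw [← Real.rpow_add (jb_pos _)]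
      simp
    calc ‖Θ j k l‖ = ‖Θ j k l‖ * (jb (znorm (j - k) + znorm (j - l)) ^ (2 * N) *
          jb (znorm (j - k) + znorm (j - l)) ^ (-(2 * N))) := by rw [hRid, mul_one]
    _ = ‖Θ j k l‖ * jb (znorm (j - k) + znorm (j - l)) ^ (2 * N) *
          jb (znorm (j - k) + znorm (j - l)) ^ (-(2 * N)) := by ring
    _ ≤ M₀ * (jb (znorm j + znorm k) ^ ω₁ * jb (znorm j + znorm l) ^ ω₂) *
          jb (znorm (j - k) + znorm (j - l)) ^ (-(2 * N)) :=
        mul_le_mul_of_nonneg_right hXle (nn _ _)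
    _ = _ := by ring
  set C₁ := M₀ * ((2 * Real.sqrt 2) ^ A₁ * (2 * Real.sqrt 2) ^ A₂) with hC₁s
  have h2s2 : (0:ℝ) < 2 * Real.sqrt 2 := by nlinarith [one_le_sqrt2]
  have hC₁0 : 0 ≤ C₁ := mul_nonneg hM₀ (mul_nonneg (Real.rpow_nonneg h2s2.le _)
    (Real.rpow_nonneg h2s2.le _))
  set 𝔄 : Zd d → ℝ≥0∞ := fun m => ENNReal.ofReal (jb (znorm m) ^ (-u)) with h𝔄s
  set SA := ∑' m, 𝔄 m with hSAs
  have hSA : SA ≠ ∞ := sum_jb_ne_top hd hu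
  refine ⟨C₁ * SA.toReal * SA.toReal + 1, by positivity, ?_⟩
  intro f g
  set F : Zd d → ℝ≥0∞ := fun k => ENNReal.ofReal (jb (znorm k) ^ (s₁ + ω₁) * ‖f k‖) with hFs
  set G : Zd d → ℝ≥0∞ := fun l => ENNReal.ofReal (jb (znorm l) ^ (s₂ + ω₂) * ‖g l‖) with hGs
  -- the real kernel estimate
  have key : ∀ j k l : Zd d, jb (znorm j) ^ (s₁ + s₂) * ‖Θ j k l * f k * g l‖ ≤
      C₁ * ((jb (znorm (j - k)) ^ (-u) * (jb (znorm k) ^ (s₁ + ω₁) * ‖f k‖)) *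
        (jb (znorm (j - l)) ^ (-u) * (jb (znorm l) ^ (s₂ + ω₂) * ‖g l‖))) := by
    intro j k l
    have hpeel1 := peel_jb s₁ ω₁ j k
    have hpeel2 := peel_jb s₂ ω₂ j l
    rw [← hA₁] at hpeel1
    rw [← hA₂] at hpeel2
    have h2N : -(2 * N) = -((A₁ + u) + (A₂ + u)) := by rw [hus]; ring
    have hsplit : jb (znorm (j - k) + znorm (j - l)) ^ (-(2 * N)) ≤
        jb (znorm (j - k)) ^ (-(A₁ + u)) * jb (znorm (j - l)) ^ (-(A₂ + u)) := by
      rw [h2N]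
      exact split_jb (znorm_nonneg _) (znorm_nonneg _) ha₁u ha₂u
    have hΘ' := Θbd j k l
    have h0 : jb (znorm j) ^ (s₁ + s₂) = jb (znorm j) ^ s₁ * jb (znorm j) ^ s₂ :=
      Real.rpow_add (jb_pos _) s₁ s₂
    calc jb (znorm j) ^ (s₁ + s₂) * ‖Θ j k l * f k * g l‖
        = (jb (znorm j) ^ s₁ * jb (znorm j) ^ s₂) * (‖Θ j k l‖ * (‖f k‖ * ‖g l‖)) := by
          rw [h0, norm_mul, norm_mul]; ring
    _ ≤ (jb (znorm j) ^ s₁ * jb (znorm j) ^ s₂) *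
          ((M₀ * (jb (znorm j + znorm k) ^ ω₁ * jb (znorm j + znorm l) ^ ω₂ *
            jb (znorm (j - k) + znorm (j - l)) ^ (-(2 * N)))) * (‖f k‖ * ‖g l‖)) := by
          apply mul_le_mul_of_nonneg_left
            (mul_le_mul_of_nonneg_right hΘ' (mul_nonneg (norm_nonneg _) (norm_nonneg _)))
            (mul_nonneg (nn _ _) (nn _ _))
    _ = M₀ * ((jb (znorm j) ^ s₁ * jb (znorm j + znorm k) ^ ω₁) *
          (jb (znorm j) ^ s₂ * jb (znorm j + znorm l) ^ ω₂)) *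
          jb (znorm (j - k) + znorm (j - l)) ^ (-(2 * N)) * (‖f k‖ * ‖g l‖) := by ring
    _ ≤ M₀ * (((2 * Real.sqrt 2) ^ A₁ * (jb (znorm k) ^ (s₁ + ω₁) * jb (znorm (j - k)) ^ A₁)) *
          ((2 * Real.sqrt 2) ^ A₂ * (jb (znorm l) ^ (s₂ + ω₂) * jb (znorm (j - l)) ^ A₂))) *
          (jb (znorm (j - k)) ^ (-(A₁ + u)) * jb (znorm (j - l)) ^ (-(A₂ + u))) *
          (‖f k‖ * ‖g l‖) := by
          apply mul_le_mul_of_nonneg_right _ (mul_nonneg (norm_nonneg _) (norm_nonneg _))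
          apply mul_le_mul _ hsplit (nn _ _) _
          · apply mul_le_mul_of_nonneg_left _ hM₀
            apply mul_le_mul hpeel1 hpeel2 (mul_nonneg (nn _ _) (nn _ _))
              (mul_nonneg (Real.rpow_nonneg h2s2.le _) (mul_nonneg (nn _ _) (nn _ _)))
          · apply mul_nonneg hM₀
            apply mul_nonneg <;>
              exact mul_nonneg (Real.rpow_nonneg h2s2.le _) (mul_nonneg (nn _ _) (nn _ _))
    _ = C₁ * (((jb (znorm (j - k)) ^ A₁ * jb (znorm (j - k)) ^ (-(A₁ + u))) *
          (jb (znorm k) ^ (s₁ + ω₁) * ‖f k‖)) *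
          ((jb (znorm (j - l)) ^ A₂ * jb (znorm (j - l)) ^ (-(A₂ + u))) *
          (jb (znorm l) ^ (s₂ + ω₂) * ‖g l‖))) := by
          rw [hC₁s]; ring
    _ = _ := by rw [collapse (jb_pos _) A₁ u, collapse (jb_pos _) A₂ u]
  -- pointwise ENNReal bound
  have hT : ∀ j : Zd d, ENNReal.ofReal (jb (znorm j) ^ (s₁ + s₂) * ‖Tbil Θ f g j‖) ≤
      ENNReal.ofReal C₁ * ((∑' k, 𝔄 (j - k) * F k) * (∑' l, 𝔄 (j - l) * G l)) := by
    intro j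
    have h1 : ENNReal.ofReal ‖Tbil Θ f g j‖ ≤
        ∑' k, ∑' l, ENNReal.ofReal ‖Θ j k l * f k * g l‖ := by
      calc ENNReal.ofReal ‖Tbil Θ f g j‖
          ≤ ∑' k, ENNReal.ofReal ‖∑' l, Θ j k l * f k * g l‖ := ofReal_norm_tsum_le _
      _ ≤ ∑' k, ∑' l, ENNReal.ofReal ‖Θ j k l * f k * g l‖ :=
          ENNReal.tsum_le_tsum fun k => ofReal_norm_tsum_le _
    calc ENNReal.ofReal (jb (znorm j) ^ (s₁ + s₂) * ‖Tbil Θ f g j‖)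
        = ENNReal.ofReal (jb (znorm j) ^ (s₁ + s₂)) * ENNReal.ofReal ‖Tbil Θ f g j‖ :=
          ENNReal.ofReal_mul (nn _ _)
    _ ≤ ENNReal.ofReal (jb (znorm j) ^ (s₁ + s₂)) *
          ∑' k, ∑' l, ENNReal.ofReal ‖Θ j k l * f k * g l‖ := mul_le_mul_right h1 _
    _ = ∑' k, ∑' l, ENNReal.ofReal (jb (znorm j) ^ (s₁ + s₂)) *
          ENNReal.ofReal ‖Θ j k l * f k * g l‖ := by
          rw [← ENNReal.tsum_mul_left]
          exact tsum_congr fun k => (ENNReal.tsum_mul_left).symm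
    _ = ∑' k, ∑' l, ENNReal.ofReal (jb (znorm j) ^ (s₁ + s₂) * ‖Θ j k l * f k * g l‖) :=
          tsum_congr fun k => tsum_congr fun l => (ENNReal.ofReal_mul (nn _ _)).symm
    _ ≤ ∑' k, ∑' l, ENNReal.ofReal
          (C₁ * ((jb (znorm (j - k)) ^ (-u) * (jb (znorm k) ^ (s₁ + ω₁) * ‖f k‖)) *
            (jb (znorm (j - l)) ^ (-u) * (jb (znorm l) ^ (s₂ + ω₂) * ‖g l‖)))) :=
          ENNReal.tsum_le_tsum fun k => ENNReal.tsum_le_tsum fun l =>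
            ENNReal.ofReal_le_ofReal (key j k l)
    _ = ∑' k, ∑' l, ENNReal.ofReal C₁ * ((𝔄 (j - k) * F k) * (𝔄 (j - l) * G l)) := by
          refine tsum_congr fun k => tsum_congr fun l => ?_
          rw [ENNReal.ofReal_mul hC₁0]
          congr 1
          rw [ENNReal.ofReal_mul (mul_nonneg (nn _ _) (mul_nonneg (nn _ _) (norm_nonneg _)))]
          congr 1
          · exact ENNReal.ofReal_mul (nn _ _)
          · exact ENNReal.ofReal_mul (nn _ _)
    _ = ENNReal.ofReal C₁ * ((∑' k, 𝔄 (j - k) * F k) * (∑' l, 𝔄 (j - l) * G l)) := by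
          calc ∑' (k : Zd d), ∑' (l : Zd d),
                ENNReal.ofReal C₁ * ((𝔄 (j - k) * F k) * (𝔄 (j - l) * G l))
              = ∑' (k : Zd d), (ENNReal.ofReal C₁ * (𝔄 (j - k) * F k)) *
                  ∑' (l : Zd d), 𝔄 (j - l) * G l := by
                refine tsum_congr fun k => ?_
                rw [← ENNReal.tsum_mul_left]
                exact tsum_congr fun l => by ring
          _ = (∑' (k : Zd d), ENNReal.ofReal C₁ * (𝔄 (j - k) * F k)) *
                  ∑' (l : Zd d), 𝔄 (j - l) * G l := ENNReal.tsum_mul_right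
          _ = _ := by rw [ENNReal.tsum_mul_left]; ring
  -- assemble
  calc wlpNorm r (s₁ + s₂) (Tbil Θ f g)
      ≤ nestNorm r (fun j => (ENNReal.ofReal C₁ * ∑' k, 𝔄 (j - k) * F k) *
          ∑' l, 𝔄 (j - l) * G l) := by
        apply nestNorm_mono
        intro j
        exact le_trans (hT j) (le_of_eq (by ring))
  _ ≤ nestNorm p (fun j => ENNReal.ofReal C₁ * ∑' k, 𝔄 (j - k) * F k) *
        nestNorm q (fun j => ∑' l, 𝔄 (j - l) * G l) := nestNorm_holder hp hq hpqr _ _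
  _ ≤ (ENNReal.ofReal C₁ * nestNorm p (fun j => ∑' k, 𝔄 (j - k) * F k)) *
        nestNorm q (fun j => ∑' l, 𝔄 (j - l) * G l) :=
      mul_le_mul_left (nestNorm_const_mul_le hp _ _) _
  _ ≤ (ENNReal.ofReal C₁ * (SA * nestNorm p F)) * (SA * nestNorm q G) :=
      mul_le_mul' (mul_le_mul_right (nestNorm_conv_le hp 𝔄 F) _) (nestNorm_conv_le hq 𝔄 G)
  _ = (ENNReal.ofReal C₁ * SA * SA) * nestNorm p F * nestNorm q G := by ring
  _ ≤ ENNReal.ofReal (C₁ * SA.toReal * SA.toReal + 1) * nestNorm p F * nestNorm q G := by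
      have h1 : ENNReal.ofReal C₁ * SA * SA = ENNReal.ofReal (C₁ * SA.toReal * SA.toReal) := by
        rw [ENNReal.ofReal_mul (mul_nonneg hC₁0 ENNReal.toReal_nonneg),
          ENNReal.ofReal_mul hC₁0, ENNReal.ofReal_toReal hSA]
      have hCb : ENNReal.ofReal C₁ * SA * SA ≤
          ENNReal.ofReal (C₁ * SA.toReal * SA.toReal + 1) := by
        rw [h1]
        exact ENNReal.ofReal_le_ofReal (by linarith)
      exact mul_le_mul_left (mul_le_mul_left hCb _) _
end
end
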